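/- arXiv:1807.08838 — 4 statements merged into one kernel-verified Lean document; each statement's English description precedes it below -/
import Mathlib

section
/- Let E₁ = (tr/n)⊗id and E₂ = id⊗(tr/m) denote the normalized partial traces on M_n(ℂ)⊗M_m(ℂ). For any state ρ on M_n⊗M_m one has D(ρ ‖ E₁E₂(ρ)) = D(ρ ‖ E₁(ρ)) + D(E₁(ρ) ‖ E₁E₂(ρ)), and consequently D(ρ ‖ E₁E₂(ρ)) ≤ D(ρ ‖ E₁(ρ)) + D(ρ ‖ E₂(ρ)). -/
set_option linter.unusedSectionVars false

open Matrix
open scoped ComplexOrder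

/-- Matrix logarithm via the continuous functional calculus. -/
noncomputable def matLog {d : Type*} [Fintype d] [DecidableEq d]
    (A : Matrix d d ℂ) : Matrix d d ℂ :=
  cfc Real.log A

/-- Quantum relative entropy `D(a‖b) = tr(a log a) - tr(a log b)` (real part). -/
noncomputable def relEnt {d : Type*} [Fintype d] [DecidableEq d]
    (a b : Matrix d d ℂ) : ℝ :=
  ((a * matLog a).trace - (a * matLog b).trace).re

/-- Normalized partial trace over the first tensor factor:
`E₁ = (tr/n) ⊗ id` on `M_n ⊗ M_m`. -/
noncomputable def E₁ {n m : ℕ} (ρ : Matrix (Fin n × Fin m) (Fin n × Fin m) ℂ) :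
    Matrix (Fin n × Fin m) (Fin n × Fin m) ℂ :=
  Matrix.of fun p q =>
    if p.1 = q.1 then (n : ℂ)⁻¹ * ∑ a : Fin n, ρ (a, p.2) (a, q.2) else 0

/-- Normalized partial trace over the second tensor factor:
`E₂ = id ⊗ (tr/m)` on `M_n ⊗ M_m`. -/
noncomputable def E₂ {n m : ℕ} (ρ : Matrix (Fin n × Fin m) (Fin n × Fin m) ℂ) :
    Matrix (Fin n × Fin m) (Fin n × Fin m) ℂ :=
  Matrix.of fun p q =>
    if p.2 = q.2 then (m : ℂ)⁻¹ * ∑ b : Fin m, ρ (p.1, b) (q.1, b) else 0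

namespace StmtAux
open Topology Matrix Kronecker

variable {ι : Type*} [Fintype ι] [DecidableEq ι]

/-- complex diagonal matrix with real entries -/
noncomputable abbrev cDiag (d : ι → ℝ) : Matrix ι ι ℂ :=
  Matrix.diagonal (RCLike.ofReal ∘ d)

omit [Fintype ι] [DecidableEq ι] in
lemma star_comp_ofReal (d : ι → ℝ) :
    star (RCLike.ofReal ∘ d : ι → ℂ) = RCLike.ofReal ∘ d := by
  ext i; simp [Pi.star_def, RCLike.conj_ofReal]

lemma star_cDiag (d : ι → ℝ) : star (cDiag d) = cDiag d := by
  rw [Matrix.star_eq_conjTranspose, Matrix.diagonal_conjTranspose, star_comp_ofReal]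

lemma isSelfAdjoint_conj (U : Matrix ι ι ℂ) (d : ι → ℝ) :
    _root_.IsSelfAdjoint (U * cDiag d * star U) :=
  show star _ = _ by simp only [Matrix.star_mul, star_star, star_cDiag, mul_assoc]

lemma spectrum_conj {U : Matrix ι ι ℂ} (hU : U ∈ unitary (Matrix ι ι ℂ)) (d : ι → ℝ) :
    spectrum ℝ (U * cDiag d * star U) = Set.range d := by
  lift U to unitary (Matrix ι ι ℂ) using hU
  ext x
  rw [show star (U : Matrix ι ι ℂ) = ((star U : unitary (Matrix ι ι ℂ)) : Matrix ι ι ℂ) from rfl,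
    Unitary.coe_star, Unitary.spectrum_star_right_conjugate, ← spectrum.algebraMap_mem_iff ℂ,
    cDiag, spectrum_diagonal, RCLike.algebraMap_eq_ofReal]
  simp

variable {U : Matrix ι ι ℂ}

lemma d_mem_spectrum (hU : U ∈ unitary (Matrix ι ι ℂ)) (d : ι → ℝ) (i : ι) :
    d i ∈ spectrum ℝ (U * cDiag d * star U) := by
  rw [spectrum_conj hU d]; exact ⟨i, rfl⟩

/-- auxiliary star algebra homomorphism realizing the cfc of `U * cDiag d * star U`. -/
noncomputable def conjAux (hU : U ∈ unitary (Matrix ι ι ℂ)) (d : ι → ℝ) :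
    C(spectrum ℝ (U * cDiag d * star U), ℝ) →⋆ₐ[ℝ] Matrix ι ι ℂ where
  toFun g := U * cDiag (fun i => g ⟨d i, d_mem_spectrum hU d i⟩) * star U
  map_one' := by
    simp only [ContinuousMap.coe_one, Pi.one_apply]
    have : cDiag (fun _ : ι => (1:ℝ)) = 1 := by
      simp [cDiag, Function.comp_def, Matrix.diagonal_one]
    rw [this, mul_one, Unitary.mul_star_self_of_mem hU]
  map_mul' f g := by
    have h : ∀ {x1 x2 x3 x4 x5 x6 : Matrix ι ι ℂ},
        (x1 * x2 * x3) * (x4 * x5 * x6) = x1 * (x2 * (x3 * x4) * x5) * x6 := by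
      intros; simp only [mul_assoc]
    simp only [h, Unitary.star_mul_self_of_mem hU, mul_one, cDiag,
      diagonal_mul_diagonal]
    congr! with i
    simp
  map_zero' := by
    have : cDiag (fun _ : ι => (0:ℝ)) = 0 := by simp [cDiag, Function.comp_def]
    simp [this]
  map_add' f g := by
    simp only [ContinuousMap.coe_add, Pi.add_apply, cDiag, ← Matrix.add_mul, ← Matrix.mul_add,
      diagonal_add]
    congr! with i
    simp
  commutes' r := by
    have h2 : cDiag (fun _ : ι => r) = algebraMap ℝ (Matrix ι ι ℂ) r := by
      rw [Algebra.algebraMap_eq_smul_one]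
      ext i j
      simp only [cDiag, Function.comp_def, Matrix.diagonal_apply, Matrix.smul_apply,
        Matrix.one_apply, Complex.real_smul]
      split <;> simp
    calc (U * cDiag fun i => ((algebraMap ℝ C(spectrum ℝ (U * cDiag d * star U), ℝ)) r)
          ⟨d i, d_mem_spectrum hU d i⟩) * star U
        = U * cDiag (fun _ : ι => r) * star U := rfl
      _ = U * (algebraMap ℝ (Matrix ι ι ℂ) r) * star U := by rw [h2]
      _ = algebraMap ℝ (Matrix ι ι ℂ) r := by
          rw [Algebra.algebraMap_eq_smul_one, Matrix.mul_smul, mul_one, Matrix.smul_mul,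
            Unitary.mul_star_self_of_mem hU]
  map_star' f := by
    simp only [star_trivial]
    exact (isSelfAdjoint_conj U _).symm

lemma isClosedEmbedding_conjAux (hU : U ∈ unitary (Matrix ι ι ℂ)) (d : ι → ℝ) :
    IsClosedEmbedding ⇑(conjAux hU d) := by
  have h0 : FiniteDimensional ℝ C(spectrum ℝ (U * cDiag d * star U), ℝ) :=
    FiniteDimensional.of_injective (ContinuousMap.coeFnLinearMap ℝ (M := ℝ)) DFunLike.coe_injective
  refine LinearMap.isClosedEmbedding_of_injective (𝕜 := ℝ)
    (E := C(spectrum ℝ (U * cDiag d * star U), ℝ))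
    (F := Matrix ι ι ℂ) (f := conjAux hU d) <| LinearMap.ker_eq_bot'.mpr fun f hf ↦ ?_
  have h2 : cDiag (fun i => f ⟨d i, d_mem_spectrum hU d i⟩) = (0 : Matrix ι ι ℂ) := by
    replace hf : U * cDiag (fun i => f ⟨d i, d_mem_spectrum hU d i⟩) * star U = 0 := hf
    replace hf := congr($(hf) * U)
    simp only [mul_assoc, Unitary.star_mul_self_of_mem hU, mul_one, zero_mul] at hf
    simpa [← mul_assoc, Unitary.star_mul_self_of_mem hU] using
      congr((star U : Matrix ι ι ℂ) * $(hf))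
  ext x
  simp only [ContinuousMap.zero_apply]
  obtain ⟨x, hx⟩ := x
  obtain ⟨i, rfl⟩ := (spectrum_conj hU d) ▸ hx
  rw [cDiag, ← Matrix.diagonal_zero] at h2
  have := (Matrix.diagonal_eq_diagonal_iff).mp h2
  exact RCLike.ofReal_eq_zero.mp (this i)

lemma conjAux_id (hU : U ∈ unitary (Matrix ι ι ℂ)) (d : ι → ℝ) :
    conjAux hU d (ContinuousMap.restrict (spectrum ℝ (U * cDiag d * star U))
      (ContinuousMap.id ℝ)) = U * cDiag d * star U := rfl

lemma cfc_conj_cDiag (f : ℝ → ℝ) (hU : U ∈ unitary (Matrix ι ι ℂ)) (d : ι → ℝ) :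
    cfc f (U * cDiag d * star U) = U * cDiag (f ∘ d) * star U := by
  have hM : _root_.IsSelfAdjoint (U * cDiag d * star U) := isSelfAdjoint_conj U d
  have key := cfcHom_eq_of_continuous_of_map_id hM (conjAux hU d)
    (isClosedEmbedding_conjAux hU d).continuous (conjAux_id hU d)
  rw [cfc_apply f _ hM (by rw [continuousOn_iff_continuous_restrict]; fun_prop), key]
  rfl

lemma eigenvectorUnitary_mem {A : Matrix ι ι ℂ} (hA : A.IsHermitian) :
    (hA.eigenvectorUnitary : Matrix ι ι ℂ) ∈ unitary (Matrix ι ι ℂ) :=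
  SetLike.coe_mem _

lemma matLog_eq_spectral {A : Matrix ι ι ℂ} (hA : A.IsHermitian) :
    matLog A = (hA.eigenvectorUnitary : Matrix ι ι ℂ) *
      cDiag (Real.log ∘ hA.eigenvalues) * star (hA.eigenvectorUnitary : Matrix ι ι ℂ) := by
  rw [matLog, hA.cfc_eq, Matrix.IsHermitian.cfc, Unitary.conjStarAlgAut_apply]

lemma trace_eq_sum_eigenvalues {A : Matrix ι ι ℂ} (hA : A.IsHermitian) :
    A.trace = ((∑ i, hA.eigenvalues i : ℝ) : ℂ) := by
  conv_lhs => rw [hA.spectral_theorem, Unitary.conjStarAlgAut_apply]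
  rw [Matrix.trace_mul_cycle, Unitary.star_mul_self_of_mem (eigenvectorUnitary_mem hA),
    Matrix.one_mul, Matrix.trace_diagonal]
  push_cast
  rfl

lemma trace_cDiag_conj (W : Matrix ι ι ℂ) (d e : ι → ℝ) :
    (cDiag d * W * cDiag e * star W).trace
      = ((∑ i, ∑ j, d i * e j * Complex.normSq (W i j) : ℝ) : ℂ) := by
  have h1 : ∀ i j, (cDiag d * W * cDiag e) i j = (d i : ℂ) * W i j * (e j : ℂ) := by
    intro i j
    rw [Matrix.mul_diagonal, Matrix.diagonal_mul]
    rfl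
  have h2 : ∀ i, (cDiag d * W * cDiag e * star W) i i
      = ∑ j, ((d i * e j : ℝ) : ℂ) * (W i j * (starRingEnd ℂ) (W i j)) := by
    intro i
    rw [Matrix.mul_apply]
    refine Finset.sum_congr rfl fun j _ => ?_
    rw [h1, Matrix.star_apply]
    simp only [RCLike.star_def]
    push_cast
    ring
  rw [Matrix.trace]
  push_cast
  refine Finset.sum_congr rfl fun i _ => ?_
  rw [Matrix.diag, h2]
  push_cast
  refine Finset.sum_congr rfl fun j _ => ?_
  rw [Complex.mul_conj]

lemma sum_normSq_row {W : Matrix ι ι ℂ} (hW : W ∈ unitary (Matrix ι ι ℂ)) (i : ι) :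
    ∑ j, Complex.normSq (W i j) = 1 := by
  have h := congrFun (congrFun (congrArg (fun M => (M : Matrix ι ι ℂ))
    (Unitary.mul_star_self_of_mem hW)) i) i
  simp only [Matrix.mul_apply, Matrix.star_apply, Matrix.one_apply_eq] at h
  have : ((∑ j, Complex.normSq (W i j) : ℝ) : ℂ) = 1 := by
    push_cast
    rw [← h]
    refine Finset.sum_congr rfl fun j _ => ?_
    rw [← Complex.mul_conj]
    rfl
  exact_mod_cast this

lemma sum_normSq_col {W : Matrix ι ι ℂ} (hW : W ∈ unitary (Matrix ι ι ℂ)) (j : ι) :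
    ∑ i, Complex.normSq (W i j) = 1 := by
  have h := congrFun (congrFun (congrArg (fun M => (M : Matrix ι ι ℂ))
    (Unitary.star_mul_self_of_mem hW)) j) j
  simp only [Matrix.mul_apply, Matrix.star_apply, Matrix.one_apply_eq] at h
  have : ((∑ i, Complex.normSq (W i j) : ℝ) : ℂ) = 1 := by
    push_cast
    rw [← h]
    refine Finset.sum_congr rfl fun i _ => ?_
    rw [← Complex.mul_conj]
    ring_nf
    rfl
  exact_mod_cast this

lemma klein {ρ : Matrix ι ι ℂ} (hρ : ρ.PosDef) (hρt : ρ.trace = 1)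
    {V : Matrix ι ι ℂ} (hV : V ∈ unitary (Matrix ι ι ℂ)) {q : ι → ℝ}
    (hq : ∀ i, 0 < q i) (hqs : ∑ i, q i = 1) :
    (ρ * (V * cDiag (Real.log ∘ q) * star V)).trace.re ≤ (ρ * matLog ρ).trace.re := by
  have hA := hρ.1
  set U : Matrix ι ι ℂ := ↑hA.eigenvectorUnitary with hUdef
  have hU : U ∈ unitary (Matrix ι ι ℂ) := eigenvectorUnitary_mem hA
  set p := hA.eigenvalues with hpdef
  have hp : ∀ i, 0 < p i := hρ.eigenvalues_pos
  have hps : ∑ i, p i = 1 := by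
    have h := trace_eq_sum_eigenvalues hA
    rw [hρt] at h
    exact_mod_cast h.symm
  set W := star U * V with hWdef
  have hWu : W ∈ unitary (Matrix ι ι ℂ) := mul_mem (Unitary.star_mem hU) hV
  have hsW : star W = star V * U := by
    rw [hWdef, Matrix.star_mul, star_star]
  have hL : (ρ * (V * cDiag (Real.log ∘ q) * star V)).trace
      = (cDiag p * W * cDiag (Real.log ∘ q) * star W).trace := by
    conv_lhs => rw [hA.spectral_theorem, Unitary.conjStarAlgAut_apply]
    rw [hsW, hWdef]
    simp only [Matrix.mul_assoc]
    conv_lhs => rw [Matrix.trace_mul_comm]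
    simp only [Matrix.mul_assoc]
    rfl
  have hR : (ρ * matLog ρ).trace = ((∑ i, p i * Real.log (p i) : ℝ) : ℂ) := by
    rw [show matLog ρ = U * cDiag (Real.log ∘ p) * star U from matLog_eq_spectral hA]
    rw [show (ρ : Matrix ι ι ℂ) = U * cDiag p * star U from hA.spectral_theorem]
    simp only [Matrix.mul_assoc]
    rw [show star U * (U * (cDiag (Real.log ∘ p) * star U)) = cDiag (Real.log ∘ p) * star U by
      rw [← Matrix.mul_assoc, Unitary.star_mul_self_of_mem hU, Matrix.one_mul]]
    conv_lhs => rw [Matrix.trace_mul_comm]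
    simp only [Matrix.mul_assoc]
    rw [show cDiag (Real.log ∘ p) * (star U * U) = cDiag (Real.log ∘ p) by
      rw [Unitary.star_mul_self_of_mem hU, Matrix.mul_one]]
    rw [Matrix.diagonal_mul_diagonal, Matrix.trace_diagonal]
    push_cast
    rfl
  have e1 : (ρ * (V * cDiag (Real.log ∘ q) * star V)).trace.re
      = ∑ i, ∑ j, p i * Real.log (q j) * Complex.normSq (W i j) := by
    rw [hL, trace_cDiag_conj]
    exact_mod_cast Complex.ofReal_re _
  have e2 : (ρ * matLog ρ).trace.re = ∑ i, p i * Real.log (p i) := by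
    rw [hR, Complex.ofReal_re]
  rw [e1, e2]
  have key : ∀ i j, p i * Real.log (q j) * Complex.normSq (W i j)
      ≤ (p i * Real.log (p i) - p i + q j) * Complex.normSq (W i j) := by
    intro i j
    have hlog := Real.log_le_sub_one_of_pos (show 0 < q j / p i from div_pos (hq j) (hp i))
    rw [Real.log_div (hq j).ne' (hp i).ne'] at hlog
    have h2 : p i * (Real.log (q j) - Real.log (p i)) ≤ p i * (q j / p i - 1) :=
      mul_le_mul_of_nonneg_left hlog (hp i).le
    have h4 : p i * (q j / p i) = q j := by
      rw [mul_comm]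
      exact div_mul_cancel₀ (q j) (hp i).ne'
    have h3 : p i * Real.log (q j) ≤ p i * Real.log (p i) - p i + q j := by
      nlinarith [h2, h4]
    exact mul_le_mul_of_nonneg_right h3 (Complex.normSq_nonneg _)
  calc ∑ i, ∑ j, p i * Real.log (q j) * Complex.normSq (W i j)
      ≤ ∑ i, ∑ j, (p i * Real.log (p i) - p i + q j) * Complex.normSq (W i j) :=
        Finset.sum_le_sum fun i _ => Finset.sum_le_sum fun j _ => key i j
    _ = ∑ i, ((p i * Real.log (p i) - p i) + ∑ j, q j * Complex.normSq (W i j)) := by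
        refine Finset.sum_congr rfl fun i _ => ?_
        have : ∀ j, (p i * Real.log (p i) - p i + q j) * Complex.normSq (W i j)
            = (p i * Real.log (p i) - p i) * Complex.normSq (W i j)
              + q j * Complex.normSq (W i j) := fun j => by ring
        simp only [this]
        rw [Finset.sum_add_distrib, ← Finset.mul_sum, sum_normSq_row hWu, mul_one]
    _ = ∑ i, p i * Real.log (p i) := by
        rw [Finset.sum_add_distrib]
        have hcol : ∑ i, ∑ j, q j * Complex.normSq (W i j) = 1 := by
          rw [Finset.sum_comm]
          have : ∀ j, ∑ i, q j * Complex.normSq (W i j) = q j := by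
            intro j
            rw [← Finset.mul_sum, sum_normSq_col hWu, mul_one]
          simp only [this, hqs]
        rw [hcol, Finset.sum_sub_distrib, hps]
        ring

section Kron

variable {ι₁ ι₂ : Type*} [Fintype ι₁] [DecidableEq ι₁] [Fintype ι₂] [DecidableEq ι₂]

open Kronecker

lemma star_kron (A : Matrix ι₁ ι₁ ℂ) (B : Matrix ι₂ ι₂ ℂ) :
    star (A ⊗ₖ B) = star A ⊗ₖ star B := by
  ext ⟨a, b⟩ ⟨c, e⟩
  simp [Matrix.kroneckerMap_apply, Matrix.star_apply, mul_comm]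

lemma kron_mem_unitary {U₁ : Matrix ι₁ ι₁ ℂ} {U₂ : Matrix ι₂ ι₂ ℂ}
    (h₁ : U₁ ∈ unitary (Matrix ι₁ ι₁ ℂ)) (h₂ : U₂ ∈ unitary (Matrix ι₂ ι₂ ℂ)) :
    U₁ ⊗ₖ U₂ ∈ unitary (Matrix (ι₁ × ι₂) (ι₁ × ι₂) ℂ) := by
  rw [Unitary.mem_iff]
  constructor
  · rw [star_kron, ← Matrix.mul_kronecker_mul, Unitary.star_mul_self_of_mem h₁,
      Unitary.star_mul_self_of_mem h₂, Matrix.one_kronecker_one]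
  · rw [star_kron, ← Matrix.mul_kronecker_mul, Unitary.mul_star_self_of_mem h₁,
      Unitary.mul_star_self_of_mem h₂, Matrix.one_kronecker_one]

lemma cDiag_fst (g : ι₁ → ℝ) :
    cDiag (fun i : ι₁ × ι₂ => g i.1) = cDiag g ⊗ₖ (1 : Matrix ι₂ ι₂ ℂ) := by
  ext ⟨a, b⟩ ⟨c, e⟩
  simp only [Matrix.kroneckerMap_apply, Matrix.diagonal_apply, Matrix.one_apply, cDiag,
    Function.comp_apply, Prod.mk.injEq]
  by_cases h1 : a = c <;> by_cases h2 : b = e <;> simp [h1, h2]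

lemma cDiag_snd (g : ι₂ → ℝ) :
    cDiag (fun i : ι₁ × ι₂ => g i.2) = (1 : Matrix ι₁ ι₁ ℂ) ⊗ₖ cDiag g := by
  ext ⟨a, b⟩ ⟨c, e⟩
  simp only [Matrix.kroneckerMap_apply, Matrix.diagonal_apply, Matrix.one_apply, cDiag,
    Function.comp_apply, Prod.mk.injEq]
  by_cases h1 : a = c <;> by_cases h2 : b = e <;> simp [h1, h2]

lemma cDiag_add_split (g₁ : ι₁ → ℝ) (g₂ : ι₂ → ℝ) :
    cDiag (fun i : ι₁ × ι₂ => g₁ i.1 + g₂ i.2)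
      = cDiag g₁ ⊗ₖ (1 : Matrix ι₂ ι₂ ℂ) + (1 : Matrix ι₁ ι₁ ℂ) ⊗ₖ cDiag g₂ := by
  ext ⟨a, b⟩ ⟨c, e⟩
  simp only [Matrix.add_apply, Matrix.kroneckerMap_apply, Matrix.diagonal_apply,
    Matrix.one_apply, cDiag, Function.comp_apply, Prod.mk.injEq]
  by_cases h1 : a = c <;> by_cases h2 : b = e <;> simp [h1, h2, Complex.ofReal_add]

lemma matLog_kron_one {W : Matrix ι₁ ι₁ ℂ} (hW : W.PosDef) :
    matLog (W ⊗ₖ (1 : Matrix ι₂ ι₂ ℂ)) = matLog W ⊗ₖ (1 : Matrix ι₂ ι₂ ℂ) := by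
  have hA := hW.1
  set U : Matrix ι₁ ι₁ ℂ := ↑hA.eigenvectorUnitary with hUdef
  have hU : U ∈ unitary (Matrix ι₁ ι₁ ℂ) := eigenvectorUnitary_mem hA
  set p := hA.eigenvalues with hpdef
  have hkU : U ⊗ₖ (1 : Matrix ι₂ ι₂ ℂ) ∈ unitary _ :=
    kron_mem_unitary hU (one_mem (unitary (Matrix ι₂ ι₂ ℂ)))
  have key : W ⊗ₖ (1 : Matrix ι₂ ι₂ ℂ)
      = (U ⊗ₖ (1 : Matrix ι₂ ι₂ ℂ)) * cDiag (fun i : ι₁ × ι₂ => p i.1)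
        * star (U ⊗ₖ (1 : Matrix ι₂ ι₂ ℂ)) := by
    rw [cDiag_fst, star_kron, star_one, ← Matrix.mul_kronecker_mul, ← Matrix.mul_kronecker_mul,
      Matrix.mul_one, Matrix.mul_one]
    conv_lhs => rw [hA.spectral_theorem, Unitary.conjStarAlgAut_apply]
  rw [matLog, key, cfc_conj_cDiag Real.log hkU]
  rw [show (Real.log ∘ fun i : ι₁ × ι₂ => p i.1) = fun i : ι₁ × ι₂ => (Real.log ∘ p) i.1 from rfl]
  rw [cDiag_fst, star_kron, star_one, ← Matrix.mul_kronecker_mul, ← Matrix.mul_kronecker_mul,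
    Matrix.mul_one, Matrix.mul_one, ← matLog_eq_spectral hA]

lemma matLog_one_kron {W : Matrix ι₂ ι₂ ℂ} (hW : W.PosDef) :
    matLog ((1 : Matrix ι₁ ι₁ ℂ) ⊗ₖ W) = (1 : Matrix ι₁ ι₁ ℂ) ⊗ₖ matLog W := by
  have hA := hW.1
  set U : Matrix ι₂ ι₂ ℂ := ↑hA.eigenvectorUnitary with hUdef
  have hU : U ∈ unitary (Matrix ι₂ ι₂ ℂ) := eigenvectorUnitary_mem hA
  set p := hA.eigenvalues with hpdef
  have hkU : (1 : Matrix ι₁ ι₁ ℂ) ⊗ₖ U ∈ unitary _ :=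
    kron_mem_unitary (one_mem (unitary (Matrix ι₁ ι₁ ℂ))) hU
  have key : (1 : Matrix ι₁ ι₁ ℂ) ⊗ₖ W
      = ((1 : Matrix ι₁ ι₁ ℂ) ⊗ₖ U) * cDiag (fun i : ι₁ × ι₂ => p i.2)
        * star ((1 : Matrix ι₁ ι₁ ℂ) ⊗ₖ U) := by
    rw [cDiag_snd, star_kron, star_one, ← Matrix.mul_kronecker_mul, ← Matrix.mul_kronecker_mul,
      Matrix.mul_one, Matrix.mul_one]
    conv_lhs => rw [hA.spectral_theorem, Unitary.conjStarAlgAut_apply]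
  rw [matLog, key, cfc_conj_cDiag Real.log hkU]
  rw [show (Real.log ∘ fun i : ι₁ × ι₂ => p i.2) = fun i : ι₁ × ι₂ => (Real.log ∘ p) i.2 from rfl]
  rw [cDiag_snd, star_kron, star_one, ← Matrix.mul_kronecker_mul, ← Matrix.mul_kronecker_mul,
    Matrix.mul_one, Matrix.mul_one, ← matLog_eq_spectral hA]

end Kron

lemma matLog_smul {c : ℝ} (hc : 0 < c) {A : Matrix ι ι ℂ} (hA : A.PosDef) :
    matLog (c • A) = Real.log c • (1 : Matrix ι ι ℂ) + matLog A := by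
  have hH := hA.1
  set U : Matrix ι ι ℂ := ↑hH.eigenvectorUnitary with hUdef
  have hU : U ∈ unitary (Matrix ι ι ℂ) := eigenvectorUnitary_mem hH
  set p := hH.eigenvalues with hpdef
  have hp : ∀ i, 0 < p i := hA.eigenvalues_pos
  have key : c • A = U * cDiag (fun i => c * p i) * star U := by
    rw [show (A : Matrix ι ι ℂ) = U * cDiag p * star U from hH.spectral_theorem,
      ← Matrix.smul_mul, ← Matrix.mul_smul]
    congr 2
    refine Matrix.ext fun i j => ?_
    by_cases h : i = j <;>
      simp [Matrix.diagonal_apply, h, Complex.real_smul]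
  rw [matLog, key, cfc_conj_cDiag Real.log hU]
  have hsplit : (Real.log ∘ fun i => c * p i) = fun i => Real.log c + (Real.log ∘ p) i := by
    ext i
    exact Real.log_mul hc.ne' (hp i).ne'
  rw [hsplit]
  have : cDiag (fun i : ι => Real.log c + (Real.log ∘ p) i)
      = Real.log c • (1 : Matrix ι ι ℂ) + cDiag (Real.log ∘ p) := by
    refine Matrix.ext fun i j => ?_
    by_cases h : i = j <;>
      simp [Matrix.diagonal_apply, Matrix.one_apply, h, Complex.real_smul, Complex.ofReal_add]
  rw [this, Matrix.mul_add, Matrix.add_mul, Matrix.mul_smul, Matrix.mul_one, Matrix.smul_mul,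
    Unitary.mul_star_self_of_mem hU, ← matLog_eq_spectral hH]

lemma matLog_smul_one (c : ℝ) : matLog (c • (1 : Matrix ι ι ℂ)) = Real.log c • (1 : Matrix ι ι ℂ) := by
  rw [matLog, ← Algebra.algebraMap_eq_smul_one, cfc_algebraMap, Algebra.algebraMap_eq_smul_one]

lemma conj_cDiag_kron {ι₁ ι₂ : Type*} [Fintype ι₁] [DecidableEq ι₁] [Fintype ι₂] [DecidableEq ι₂]
    {U₁ : Matrix ι₁ ι₁ ℂ} {U₂ : Matrix ι₂ ι₂ ℂ}
    (h₁ : U₁ ∈ unitary (Matrix ι₁ ι₁ ℂ)) (h₂ : U₂ ∈ unitary (Matrix ι₂ ι₂ ℂ))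
    (g₁ : ι₁ → ℝ) (g₂ : ι₂ → ℝ) :
    open Kronecker in
    (U₁ ⊗ₖ U₂) * cDiag (fun i : ι₁ × ι₂ => g₁ i.1 + g₂ i.2) * star (U₁ ⊗ₖ U₂)
      = (U₁ * cDiag g₁ * star U₁) ⊗ₖ (1 : Matrix ι₂ ι₂ ℂ)
        + (1 : Matrix ι₁ ι₁ ℂ) ⊗ₖ (U₂ * cDiag g₂ * star U₂) := by
  rw [cDiag_add_split, star_kron, Matrix.mul_add, Matrix.add_mul]
  congr 1
  · rw [← Matrix.mul_kronecker_mul, ← Matrix.mul_kronecker_mul, Matrix.mul_one,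
      Unitary.mul_star_self_of_mem h₂]
  · rw [← Matrix.mul_kronecker_mul, ← Matrix.mul_kronecker_mul, Matrix.mul_one,
      Unitary.mul_star_self_of_mem h₁]

lemma posDef_smul_real {A : Matrix ι ι ℂ} (hA : A.PosDef) {c : ℝ} (hc : 0 < c) :
    (c • A).PosDef := by
  rw [Matrix.posDef_iff_dotProduct_mulVec]
  constructor
  · refine Matrix.ext fun i j => ?_
    simp only [Matrix.conjTranspose_apply, Matrix.smul_apply, star_smul, star_trivial]
    rw [show star (A j i) = Aᴴ i j from rfl, hA.1]
  · intro x hx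
    have h := hA.dotProduct_mulVec_pos hx
    have hrw : star x ⬝ᵥ (c • A) *ᵥ x = (c : ℂ) * (star x ⬝ᵥ A *ᵥ x) := by
      rw [Matrix.smul_mulVec, dotProduct_smul, Complex.real_smul]
    rw [hrw]
    exact mul_pos (by exact_mod_cast hc) h

section Specific

variable {n m : ℕ}

/-- partial trace over the second factor -/
noncomputable def pt1 (ρ : Matrix (Fin n × Fin m) (Fin n × Fin m) ℂ) :
    Matrix (Fin n) (Fin n) ℂ :=
  Matrix.of fun a a' => ∑ b, ρ (a, b) (a', b)

/-- partial trace over the first factor -/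
noncomputable def pt2 (ρ : Matrix (Fin n × Fin m) (Fin n × Fin m) ℂ) :
    Matrix (Fin m) (Fin m) ℂ :=
  Matrix.of fun b b' => ∑ a, ρ (a, b) (a, b')

variable {ρ : Matrix (Fin n × Fin m) (Fin n × Fin m) ℂ}

lemma pt1_trace : (pt1 ρ).trace = ρ.trace := by
  simp [pt1, Matrix.trace, Matrix.diag, Fintype.sum_prod_type]

lemma pt2_trace : (pt2 ρ).trace = ρ.trace := by
  rw [Matrix.trace, Matrix.trace, Fintype.sum_prod_type]
  rw [Finset.sum_comm]
  simp [pt2, Matrix.diag]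

lemma pt1_posDef [Nonempty (Fin m)] (hρ : ρ.PosDef) : (pt1 ρ).PosDef := by
  rw [Matrix.posDef_iff_dotProduct_mulVec]
  constructor
  · refine Matrix.ext fun a a' => ?_
    simp only [Matrix.conjTranspose_apply, pt1, Matrix.of_apply, star_sum]
    refine Finset.sum_congr rfl fun b _ => ?_
    rw [show star (ρ (a', b) (a, b)) = ρᴴ (a, b) (a', b) from rfl, hρ.1]
  · intro x hx
    set y : Fin m → (Fin n × Fin m → ℂ) := fun b p => if p.2 = b then x p.1 else 0 with hy
    have inner : ∀ b, star (y b) ⬝ᵥ ρ *ᵥ (y b)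
        = ∑ a, ∑ a', star (x a) * (ρ (a, b) (a', b) * x a') := by
      intro b
      simp only [hy, dotProduct, Matrix.mulVec, Pi.star_apply, Fintype.sum_prod_type]
      simp [apply_ite (starRingEnd ℂ), ite_mul, zero_mul, mul_ite, mul_zero,
        Finset.sum_ite_eq', Finset.mul_sum, mul_assoc]
    have key : star x ⬝ᵥ (pt1 ρ) *ᵥ x = ∑ b, star (y b) ⬝ᵥ ρ *ᵥ (y b) := by
      have hL : star x ⬝ᵥ (pt1 ρ) *ᵥ x
          = ∑ a, ∑ a', ∑ b, star (x a) * (ρ (a, b) (a', b) * x a') := by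
        simp only [dotProduct, Matrix.mulVec, pt1, Matrix.of_apply, Pi.star_apply,
          Finset.sum_mul, Finset.mul_sum, mul_assoc]
      rw [hL, show (∑ a, ∑ a', ∑ b, star (x a) * (ρ (a, b) (a', b) * x a'))
          = ∑ a, ∑ b, ∑ a', star (x a) * (ρ (a, b) (a', b) * x a') from
          Finset.sum_congr rfl fun a _ => Finset.sum_comm, Finset.sum_comm]
      exact (Finset.sum_congr rfl fun b _ => (inner b).symm)
    obtain ⟨a0, ha0⟩ : ∃ a, x a ≠ 0 := by
      by_contra h
      push_neg at h
      exact hx (funext h)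
    obtain ⟨b0⟩ := (inferInstance : Nonempty (Fin m))
    have hy0 : y b0 ≠ 0 := by
      intro h
      apply ha0
      have := congrFun h (a0, b0)
      simpa [hy] using this
    rw [key]
    exact Finset.sum_pos' (fun b _ => hρ.posSemidef.dotProduct_mulVec_nonneg (y b))
      ⟨b0, Finset.mem_univ _, hρ.dotProduct_mulVec_pos hy0⟩

lemma pt2_posDef [Nonempty (Fin n)] (hρ : ρ.PosDef) : (pt2 ρ).PosDef := by
  rw [Matrix.posDef_iff_dotProduct_mulVec]
  constructor
  · refine Matrix.ext fun b b' => ?_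
    simp only [Matrix.conjTranspose_apply, pt2, Matrix.of_apply, star_sum]
    refine Finset.sum_congr rfl fun a _ => ?_
    rw [show star (ρ (a, b') (a, b)) = ρᴴ (a, b) (a, b') from rfl, hρ.1]
  · intro x hx
    set y : Fin n → (Fin n × Fin m → ℂ) := fun a p => if p.1 = a then x p.2 else 0 with hy
    have inner : ∀ a, star (y a) ⬝ᵥ ρ *ᵥ (y a)
        = ∑ b, ∑ b', star (x b) * (ρ (a, b) (a, b') * x b') := by
      intro a
      simp only [hy, dotProduct, Matrix.mulVec, Pi.star_apply, Fintype.sum_prod_type]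
      simp [apply_ite (starRingEnd ℂ), ite_mul, zero_mul, mul_ite, mul_zero,
        Finset.sum_ite_eq', Finset.mul_sum, mul_assoc]
    have key : star x ⬝ᵥ (pt2 ρ) *ᵥ x = ∑ a, star (y a) ⬝ᵥ ρ *ᵥ (y a) := by
      have hL : star x ⬝ᵥ (pt2 ρ) *ᵥ x
          = ∑ b, ∑ b', ∑ a, star (x b) * (ρ (a, b) (a, b') * x b') := by
        simp only [dotProduct, Matrix.mulVec, pt2, Matrix.of_apply, Pi.star_apply,
          Finset.sum_mul, Finset.mul_sum, mul_assoc]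
      rw [hL, show (∑ b, ∑ b', ∑ a, star (x b) * (ρ (a, b) (a, b') * x b'))
          = ∑ b, ∑ a, ∑ b', star (x b) * (ρ (a, b) (a, b') * x b') from
          Finset.sum_congr rfl fun b _ => Finset.sum_comm, Finset.sum_comm]
      exact (Finset.sum_congr rfl fun a _ => (inner a).symm)
    obtain ⟨b0, hb0⟩ : ∃ b, x b ≠ 0 := by
      by_contra h
      push_neg at h
      exact hx (funext h)
    obtain ⟨a0⟩ := (inferInstance : Nonempty (Fin n))
    have hy0 : y a0 ≠ 0 := by
      intro h
      apply hb0
      have := congrFun h (a0, b0)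
      simpa [hy] using this
    rw [key]
    exact Finset.sum_pos' (fun a _ => hρ.posSemidef.dotProduct_mulVec_nonneg (y a))
      ⟨a0, Finset.mem_univ _, hρ.dotProduct_mulVec_pos hy0⟩

open Kronecker

lemma E1_eq : E₁ ρ = (1 : Matrix (Fin n) (Fin n) ℂ) ⊗ₖ ((n : ℝ)⁻¹ • pt2 ρ) := by
  ext ⟨a, b⟩ ⟨c, e⟩
  simp only [E₁, Matrix.of_apply, Matrix.kroneckerMap_apply, Matrix.one_apply,
    Matrix.smul_apply, pt2, Complex.real_smul]
  by_cases h : a = c <;> simp [h]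

lemma E2_eq : E₂ ρ = ((m : ℝ)⁻¹ • pt1 ρ) ⊗ₖ (1 : Matrix (Fin m) (Fin m) ℂ) := by
  ext ⟨a, b⟩ ⟨c, e⟩
  simp only [E₂, Matrix.of_apply, Matrix.kroneckerMap_apply, Matrix.one_apply,
    Matrix.smul_apply, pt1, Complex.real_smul]
  by_cases h : b = e <;> simp [h, mul_comm]

lemma E1E2_eq (htr : ρ.trace = 1) :
    E₁ (E₂ ρ) = ((n : ℝ)⁻¹ * (m : ℝ)⁻¹) • (1 : Matrix (Fin n × Fin m) (Fin n × Fin m) ℂ) := by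
  have htr' : ∑ a : Fin n, ∑ b : Fin m, ρ (a, b) (a, b) = 1 := by
    have h := htr
    rw [Matrix.trace, Fintype.sum_prod_type] at h
    exact h
  ext ⟨a, b⟩ ⟨c, e⟩
  simp only [E₁, E₂, Matrix.of_apply, Matrix.smul_apply, Matrix.one_apply, Prod.mk.injEq]
  by_cases h1 : a = c <;> by_cases h2 : b = e
  · subst h1; subst h2
    simp only [if_pos rfl, and_self, if_true]
    rw [← Finset.mul_sum, htr', mul_one, Complex.real_smul]
    push_cast
    ring
  · simp [h1, h2]
  · simp [h1, h2]
  · simp [h1, h2]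

lemma trace_mul_kron_one (X : Matrix (Fin n × Fin m) (Fin n × Fin m) ℂ)
    (Z : Matrix (Fin n) (Fin n) ℂ) :
    (X * (Z ⊗ₖ (1 : Matrix (Fin m) (Fin m) ℂ))).trace = (pt1 X * Z).trace := by
  have hL : (X * (Z ⊗ₖ (1 : Matrix (Fin m) (Fin m) ℂ))).trace
      = ∑ a, ∑ b, ∑ a', X (a, b) (a', b) * Z a' a := by
    rw [Matrix.trace]
    simp only [Matrix.diag, Matrix.mul_apply, Matrix.kroneckerMap_apply, Matrix.one_apply,
      Fintype.sum_prod_type, mul_ite, mul_one, mul_zero, Finset.sum_ite_eq', Finset.mem_univ,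
      if_true]
  have hR : (pt1 X * Z).trace = ∑ a, ∑ a', ∑ b, X (a, b) (a', b) * Z a' a := by
    rw [Matrix.trace]
    simp only [Matrix.diag, Matrix.mul_apply, pt1, Matrix.of_apply, Finset.sum_mul]
  rw [hL, hR]
  exact Finset.sum_congr rfl fun a _ => Finset.sum_comm

lemma trace_mul_one_kron (X : Matrix (Fin n × Fin m) (Fin n × Fin m) ℂ)
    (Z : Matrix (Fin m) (Fin m) ℂ) :
    (X * ((1 : Matrix (Fin n) (Fin n) ℂ) ⊗ₖ Z)).trace = (pt2 X * Z).trace := by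
  have hL : (X * ((1 : Matrix (Fin n) (Fin n) ℂ) ⊗ₖ Z)).trace
      = ∑ a, ∑ b, ∑ b', X (a, b) (a, b') * Z b' b := by
    rw [Matrix.trace]
    simp only [Matrix.diag, Matrix.mul_apply, Matrix.kroneckerMap_apply, Matrix.one_apply,
      Fintype.sum_prod_type, ite_mul, one_mul, zero_mul, mul_ite, mul_zero,
      Finset.sum_ite_eq', Finset.mem_univ, if_true]
    refine Finset.sum_congr rfl fun a _ => Finset.sum_congr rfl fun b _ => ?_
    rw [Finset.sum_comm]
    simp [Finset.sum_ite_eq']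
  have hR : (pt2 X * Z).trace = ∑ b, ∑ b', ∑ a, X (a, b) (a, b') * Z b' b := by
    rw [Matrix.trace]
    simp only [Matrix.diag, Matrix.mul_apply, pt2, Matrix.of_apply, Finset.sum_mul]
  rw [hL, hR, show (∑ a, ∑ b, ∑ b', X (a, b) (a, b') * Z b' b)
      = ∑ b, ∑ a, ∑ b', X (a, b) (a, b') * Z b' b from Finset.sum_comm]
  exact Finset.sum_congr rfl fun b _ => Finset.sum_comm

lemma pt2_E1 (hn : (n : ℂ) ≠ 0) : pt2 (E₁ ρ) = pt2 ρ := by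
  ext b e
  simp only [pt2, Matrix.of_apply, E₁, eq_self_iff_true, if_true, Finset.sum_const,
    Finset.card_univ, Fintype.card_fin, nsmul_eq_mul]
  rw [← mul_assoc, mul_inv_cancel₀ hn, one_mul]

lemma trace_E1 (hn : (n : ℂ) ≠ 0) : (E₁ ρ).trace = ρ.trace := by
  rw [Matrix.trace, Matrix.trace]
  simp only [Matrix.diag, E₁, Matrix.of_apply, Fintype.sum_prod_type, eq_self_iff_true, if_true]
  rw [Finset.sum_const, Finset.card_univ, Fintype.card_fin, nsmul_eq_mul, ← Finset.mul_sum,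
    ← mul_assoc, mul_inv_cancel₀ hn, one_mul]
  exact Finset.sum_comm

end Specific

lemma main {n m : ℕ} (ρ : Matrix (Fin n × Fin m) (Fin n × Fin m) ℂ)
    (hρ : ρ.PosDef) (htr : ρ.trace = 1) :
    relEnt ρ (E₁ (E₂ ρ)) = relEnt ρ (E₁ ρ) + relEnt (E₁ ρ) (E₁ (E₂ ρ)) ∧
      relEnt ρ (E₁ (E₂ ρ)) ≤ relEnt ρ (E₁ ρ) + relEnt ρ (E₂ ρ) := by
  classical
  have hne : Nonempty (Fin n × Fin m) := by
    by_contra h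
    rw [not_nonempty_iff] at h
    rw [Matrix.trace, Finset.univ_eq_empty, Finset.sum_empty] at htr
    exact one_ne_zero htr.symm
  haveI hnn : Nonempty (Fin n) := ⟨hne.some.1⟩
  haveI hnm : Nonempty (Fin m) := ⟨hne.some.2⟩
  have hn0 : 0 < n := Fin.pos_iff_nonempty.mpr hnn
  have hm0 : 0 < m := Fin.pos_iff_nonempty.mpr hnm
  have hnR : (0:ℝ) < (n:ℝ) := by exact_mod_cast hn0
  have hmR : (0:ℝ) < (m:ℝ) := by exact_mod_cast hm0
  have hnC : (n:ℂ) ≠ 0 := Nat.cast_ne_zero.mpr hn0.ne'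
  have hσ₁ : (pt1 ρ).PosDef := pt1_posDef hρ
  have hσ₂ : (pt2 ρ).PosDef := pt2_posDef hρ
  have hσ₁t : (pt1 ρ).trace = 1 := by rw [pt1_trace, htr]
  have hσ₂t : (pt2 ρ).trace = 1 := by rw [pt2_trace, htr]
  have hW₁ : ((m:ℝ)⁻¹ • pt1 ρ).PosDef := posDef_smul_real hσ₁ (inv_pos.mpr hmR)
  have hW₂ : ((n:ℝ)⁻¹ • pt2 ρ).PosDef := posDef_smul_real hσ₂ (inv_pos.mpr hnR)
  have hE12 : E₁ (E₂ ρ)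
      = ((n:ℝ)⁻¹ * (m:ℝ)⁻¹) • (1 : Matrix (Fin n × Fin m) (Fin n × Fin m) ℂ) := E1E2_eq htr
  have hlogE12 : matLog (E₁ (E₂ ρ))
      = Real.log ((n:ℝ)⁻¹ * (m:ℝ)⁻¹) • (1 : Matrix (Fin n × Fin m) (Fin n × Fin m) ℂ) := by
    rw [hE12, matLog_smul_one]
  have hlogE1 : matLog (E₁ ρ)
      = (1 : Matrix (Fin n) (Fin n) ℂ) ⊗ₖ matLog ((n:ℝ)⁻¹ • pt2 ρ) := by
    rw [E1_eq (ρ := ρ)]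
    exact matLog_one_kron hW₂
  have hlogE2 : matLog (E₂ ρ)
      = matLog ((m:ℝ)⁻¹ • pt1 ρ) ⊗ₖ (1 : Matrix (Fin m) (Fin m) ℂ) := by
    rw [E2_eq (ρ := ρ)]
    exact matLog_kron_one hW₁
  have htrE1 : (E₁ ρ).trace = 1 := by rw [trace_E1 hnC, htr]
  have hsc : ∀ X : Matrix (Fin n × Fin m) (Fin n × Fin m) ℂ, X.trace = 1 →
      (X * matLog (E₁ (E₂ ρ))).trace = ((Real.log ((n:ℝ)⁻¹ * (m:ℝ)⁻¹) : ℝ) : ℂ) := by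
    intro X hX
    rw [hlogE12, Matrix.mul_smul, Matrix.mul_one, Matrix.trace_smul, hX, Complex.real_smul,
      mul_one]
  have hA := hsc ρ htr
  have hB := hsc (E₁ ρ) htrE1
  have hC : (ρ * matLog (E₁ ρ)).trace = (pt2 ρ * matLog ((n:ℝ)⁻¹ • pt2 ρ)).trace := by
    rw [hlogE1, trace_mul_one_kron]
  have hD : (E₁ ρ * matLog (E₁ ρ)).trace = (pt2 ρ * matLog ((n:ℝ)⁻¹ • pt2 ρ)).trace := by
    rw [hlogE1, trace_mul_one_kron, pt2_E1 hnC]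
  have hE : (ρ * matLog (E₂ ρ)).trace = (pt1 ρ * matLog ((m:ℝ)⁻¹ • pt1 ρ)).trace := by
    rw [hlogE2, trace_mul_kron_one]
  -- log of scaled partial traces
  have hs₁ : (pt1 ρ * matLog ((m:ℝ)⁻¹ • pt1 ρ)).trace.re
      = Real.log (m:ℝ)⁻¹ + (pt1 ρ * matLog (pt1 ρ)).trace.re := by
    rw [matLog_smul (inv_pos.mpr hmR) hσ₁, Matrix.mul_add, Matrix.trace_add, Matrix.mul_smul,
      Matrix.mul_one, Matrix.trace_smul, hσ₁t, Complex.add_re, Complex.real_smul, mul_one,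
      Complex.ofReal_re]
  have hs₂ : (pt2 ρ * matLog ((n:ℝ)⁻¹ • pt2 ρ)).trace.re
      = Real.log (n:ℝ)⁻¹ + (pt2 ρ * matLog (pt2 ρ)).trace.re := by
    rw [matLog_smul (inv_pos.mpr hnR) hσ₂, Matrix.mul_add, Matrix.trace_add, Matrix.mul_smul,
      Matrix.mul_one, Matrix.trace_smul, hσ₂t, Complex.add_re, Complex.real_smul, mul_one,
      Complex.ofReal_re]
  have hr : Real.log ((n:ℝ)⁻¹ * (m:ℝ)⁻¹) = Real.log (n:ℝ)⁻¹ + Real.log (m:ℝ)⁻¹ :=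
    Real.log_mul (inv_pos.mpr hnR).ne' (inv_pos.mpr hmR).ne'
  -- Klein's inequality with σ = σ₁ ⊗ σ₂
  have hH₁ : (pt1 ρ).IsHermitian := hσ₁.1
  have hH₂ : (pt2 ρ).IsHermitian := hσ₂.1
  have hp₁ : ∀ a, 0 < hH₁.eigenvalues a := hσ₁.eigenvalues_pos
  have hp₂ : ∀ b, 0 < hH₂.eigenvalues b := hσ₂.eigenvalues_pos
  have hsum₁ : ∑ a, hH₁.eigenvalues a = 1 := by
    have h := trace_eq_sum_eigenvalues hH₁
    rw [hσ₁t] at h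
    exact_mod_cast h.symm
  have hsum₂ : ∑ b, hH₂.eigenvalues b = 1 := by
    have h := trace_eq_sum_eigenvalues hH₂
    rw [hσ₂t] at h
    exact_mod_cast h.symm
  have hq : ∀ i : Fin n × Fin m, 0 < hH₁.eigenvalues i.1 * hH₂.eigenvalues i.2 :=
    fun i => mul_pos (hp₁ i.1) (hp₂ i.2)
  have hqs : ∑ i : Fin n × Fin m, hH₁.eigenvalues i.1 * hH₂.eigenvalues i.2 = 1 := by
    rw [Fintype.sum_prod_type]
    rw [show (∑ a, ∑ b, hH₁.eigenvalues a * hH₂.eigenvalues b)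
        = ∑ a, hH₁.eigenvalues a * ∑ b, hH₂.eigenvalues b from
      Finset.sum_congr rfl fun a _ => (Finset.mul_sum _ _ _).symm]
    rw [hsum₂]
    simpa using hsum₁
  have hV : ((hH₁.eigenvectorUnitary : Matrix (Fin n) (Fin n) ℂ)
        ⊗ₖ (hH₂.eigenvectorUnitary : Matrix (Fin m) (Fin m) ℂ))
      ∈ unitary (Matrix (Fin n × Fin m) (Fin n × Fin m) ℂ) :=
    kron_mem_unitary (eigenvectorUnitary_mem hH₁) (eigenvectorUnitary_mem hH₂)
  have hklein := klein hρ htr hV hq hqs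
  have hsplit : ((hH₁.eigenvectorUnitary : Matrix (Fin n) (Fin n) ℂ)
        ⊗ₖ (hH₂.eigenvectorUnitary : Matrix (Fin m) (Fin m) ℂ))
      * cDiag (Real.log ∘ fun i : Fin n × Fin m => hH₁.eigenvalues i.1 * hH₂.eigenvalues i.2)
      * star ((hH₁.eigenvectorUnitary : Matrix (Fin n) (Fin n) ℂ)
        ⊗ₖ (hH₂.eigenvectorUnitary : Matrix (Fin m) (Fin m) ℂ))
      = matLog (pt1 ρ) ⊗ₖ (1 : Matrix (Fin m) (Fin m) ℂ)
        + (1 : Matrix (Fin n) (Fin n) ℂ) ⊗ₖ matLog (pt2 ρ) := by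
    rw [show (Real.log ∘ fun i : Fin n × Fin m => hH₁.eigenvalues i.1 * hH₂.eigenvalues i.2)
        = fun i : Fin n × Fin m => (Real.log ∘ hH₁.eigenvalues) i.1
            + (Real.log ∘ hH₂.eigenvalues) i.2 from
      funext fun i => Real.log_mul (hp₁ i.1).ne' (hp₂ i.2).ne']
    rw [conj_cDiag_kron (eigenvectorUnitary_mem hH₁) (eigenvectorUnitary_mem hH₂),
      ← matLog_eq_spectral hH₁, ← matLog_eq_spectral hH₂]
  rw [hsplit] at hklein
  have hexp : (ρ * (matLog (pt1 ρ) ⊗ₖ (1 : Matrix (Fin m) (Fin m) ℂ)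
        + (1 : Matrix (Fin n) (Fin n) ℂ) ⊗ₖ matLog (pt2 ρ))).trace
      = (pt1 ρ * matLog (pt1 ρ)).trace + (pt2 ρ * matLog (pt2 ρ)).trace := by
    rw [Matrix.mul_add, Matrix.trace_add, trace_mul_kron_one, trace_mul_one_kron]
  rw [hexp, Complex.add_re] at hklein
  -- assemble
  constructor
  · rw [relEnt, relEnt, relEnt, hA, hB, hC, hD]
    simp only [Complex.sub_re, Complex.ofReal_re]
    ring
  · rw [relEnt, relEnt, relEnt, hA, hC, hE]
    simp only [Complex.sub_re, Complex.ofReal_re]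
    rw [hs₁, hs₂, hr]
    linarith [hklein]

end StmtAux

/-- Chain rule and subadditivity of relative entropy with respect to the two
normalized partial traces: for a full-rank state `ρ` on `M_n ⊗ M_m`,
`D(ρ‖E₁E₂ρ) = D(ρ‖E₁ρ) + D(E₁ρ‖E₁E₂ρ)` and consequently
`D(ρ‖E₁E₂ρ) ≤ D(ρ‖E₁ρ) + D(ρ‖E₂ρ)`. -/
theorem stmt_8 {n m : ℕ} (ρ : Matrix (Fin n × Fin m) (Fin n × Fin m) ℂ)
    (hρ : ρ.PosDef) (htr : ρ.trace = 1) :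
    relEnt ρ (E₁ (E₂ ρ)) = relEnt ρ (E₁ ρ) + relEnt (E₁ ρ) (E₁ (E₂ ρ)) ∧
      relEnt ρ (E₁ (E₂ ρ)) ≤ relEnt ρ (E₁ ρ) + relEnt ρ (E₂ ρ) := by
  exact StmtAux.main ρ hρ htr
end

section
/- Let B be the n×n matrix B(j,k) = min(j,k). Then 4B ≥ Id in the positive semidefinite order, i.e. for every α ∈ ℂⁿ, Σ_l |α_l|² ≤ 4 Σ_{j,k} conj(α_j) α_k min(j,k). -/
open Finset

/-- For `B(j,k) = min(j,k)` one has `4B ≥ Id`: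
`Σ_l |α_l|² ≤ 4 Σ_{j,k} conj(α_j) α_k min(j,k)`. -/
theorem stmt_10 (n : ℕ) (α : Fin n → ℂ) :
    ∑ l : Fin n, ‖α l‖ ^ 2 ≤
      4 * (∑ j : Fin n, ∑ k : Fin n,
        (starRingEnd ℂ) (α j) * α k * ((min (j.1 + 1) (k.1 + 1) : ℕ) : ℂ)).re := by
  set S : ℕ → ℂ := fun l => ∑ j ∈ univ.filter (fun j : Fin n => l ≤ j.1), α j with hS
  -- the inner sum equals ∑ l ∈ range n, conj (S l) * S l
  have hmin : ∀ j k : Fin n, ((min (j.1 + 1) (k.1 + 1) : ℕ) : ℂ)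
      = ∑ l ∈ range n, (if l ≤ j.1 ∧ l ≤ k.1 then (1 : ℂ) else 0) := by
    intro j k
    rw [Finset.sum_boole]
    congr 1
    have : (range n).filter (fun l => l ≤ j.1 ∧ l ≤ k.1)
        = range (min (j.1 + 1) (k.1 + 1)) := by
      ext l
      simp only [mem_filter, mem_range, Nat.lt_min, Nat.lt_succ_iff]
      have := j.2; have := k.2
      omega
    rw [this, Finset.card_range]
  have hinner : (∑ j : Fin n, ∑ k : Fin n,
      (starRingEnd ℂ) (α j) * α k * ((min (j.1 + 1) (k.1 + 1) : ℕ) : ℂ))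
      = ∑ l ∈ range n, (starRingEnd ℂ) (S l) * S l := by
    have step1 : (∑ j : Fin n, ∑ k : Fin n,
        (starRingEnd ℂ) (α j) * α k * ((min (j.1 + 1) (k.1 + 1) : ℕ) : ℂ))
        = ∑ j : Fin n, ∑ k : Fin n, ∑ l ∈ range n,
          (if l ≤ j.1 then (starRingEnd ℂ) (α j) else 0) * (if l ≤ k.1 then α k else 0) := by
      refine Finset.sum_congr rfl fun j _ => Finset.sum_congr rfl fun k _ => ?_
      rw [hmin j k, Finset.mul_sum]
      refine Finset.sum_congr rfl fun l _ => ?_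
      by_cases h1 : l ≤ j.1 <;> by_cases h2 : l ≤ k.1 <;> simp [h1, h2]
    rw [step1]
    rw [Finset.sum_congr rfl fun j _ => Finset.sum_comm (s := univ) (t := range n)
      (f := fun k l => (if l ≤ j.1 then (starRingEnd ℂ) (α j) else 0) * (if l ≤ k.1 then α k else 0))]
    rw [Finset.sum_comm (s := univ) (t := range n)]
    refine Finset.sum_congr rfl fun l _ => ?_
    rw [← Finset.sum_mul_sum]
    congr 1
    · show (∑ j : Fin n, if l ≤ j.1 then (starRingEnd ℂ) (α j) else 0)
        = (starRingEnd ℂ) (∑ j ∈ univ.filter (fun j : Fin n => l ≤ j.1), α j)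
      rw [map_sum, ← Finset.sum_filter]
    · exact (Finset.sum_filter _ _).symm
  have hre : (∑ j : Fin n, ∑ k : Fin n,
      (starRingEnd ℂ) (α j) * α k * ((min (j.1 + 1) (k.1 + 1) : ℕ) : ℂ)).re
      = ∑ l ∈ range n, ‖S l‖ ^ 2 := by
    rw [hinner, Complex.re_sum]
    refine Finset.sum_congr rfl fun l _ => ?_
    have : (starRingEnd ℂ) (S l) * S l = ((Complex.normSq (S l) : ℝ) : ℂ) := by
      rw [mul_comm, Complex.mul_conj]
    rw [this, Complex.ofReal_re, Complex.normSq_eq_norm_sq]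
  -- α l = S l - S (l+1)
  have hα : ∀ l : Fin n, α l = S l.1 - S (l.1 + 1) := by
    intro l
    rw [hS]
    simp only
    rw [Finset.sum_filter, Finset.sum_filter, ← Finset.sum_sub_distrib]
    have : α l = ∑ j : Fin n, if j = l then α j else 0 := by
      rw [Finset.sum_ite_eq' univ l α]; simp
    rw [this]
    refine Finset.sum_congr rfl fun j _ => ?_
    have hj : j = l ↔ j.1 = l.1 := Fin.ext_iff
    by_cases h : j = l
    · subst h
      simp
    · have hne : ¬ j.1 = l.1 := fun hh => h (Fin.ext hh)
      by_cases h1 : l.1 ≤ j.1 <;> by_cases h2 : l.1 + 1 ≤ j.1 <;>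
        first
        | (exact absurd h2 (by omega))
        | (exact absurd h1 (by omega))
        | simp [h, h1, h2]
  have hSn : S n = 0 := by
    rw [hS]
    simp only
    have : (univ.filter (fun j : Fin n => n ≤ j.1)) = ∅ := by
      ext j; simp
    simp [this]
  -- pointwise bound
  have hbound : ∀ l : Fin n, ‖α l‖ ^ 2 ≤ 2 * ‖S l.1‖ ^ 2 + 2 * ‖S (l.1 + 1)‖ ^ 2 := by
    intro l
    rw [hα l]
    have h1 : ‖S l.1 - S (l.1 + 1)‖ ≤ ‖S l.1‖ + ‖S (l.1 + 1)‖ := norm_sub_le _ _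
    nlinarith [norm_nonneg (S l.1 - S (l.1 + 1)), norm_nonneg (S l.1), norm_nonneg (S (l.1 + 1)),
      sq_nonneg (‖S l.1‖ - ‖S (l.1 + 1)‖), mul_self_le_mul_self (norm_nonneg (S l.1 - S (l.1 + 1))) h1]
  have hsum1 : ∑ l : Fin n, ‖S l.1‖ ^ 2 = ∑ l ∈ range n, ‖S l‖ ^ 2 :=
    Fin.sum_univ_eq_sum_range (fun l => ‖S l‖ ^ 2) n
  have hsum2 : ∑ l : Fin n, ‖S (l.1 + 1)‖ ^ 2 ≤ ∑ l ∈ range n, ‖S l‖ ^ 2 := by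
    rw [Fin.sum_univ_eq_sum_range (fun l => ‖S (l + 1)‖ ^ 2) n]
    have h1 : ∑ l ∈ range (n + 1), ‖S l‖ ^ 2
        = (∑ l ∈ range n, ‖S (l + 1)‖ ^ 2) + ‖S 0‖ ^ 2 := Finset.sum_range_succ' _ _
    have h2 : ∑ l ∈ range (n + 1), ‖S l‖ ^ 2
        = (∑ l ∈ range n, ‖S l‖ ^ 2) + ‖S n‖ ^ 2 := Finset.sum_range_succ _ _
    rw [hSn] at h2
    have h0 : ‖(0 : ℂ)‖ ^ 2 = 0 := by simp
    rw [h0, add_zero] at h2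
    nlinarith [sq_nonneg ‖S 0‖]
  have hmain : ∑ l : Fin n, ‖α l‖ ^ 2 ≤ 4 * ∑ l ∈ range n, ‖S l‖ ^ 2 := by
    calc ∑ l : Fin n, ‖α l‖ ^ 2
        ≤ ∑ l : Fin n, (2 * ‖S l.1‖ ^ 2 + 2 * ‖S (l.1 + 1)‖ ^ 2) :=
          Finset.sum_le_sum fun l _ => hbound l
      _ = 2 * (∑ l : Fin n, ‖S l.1‖ ^ 2) + 2 * (∑ l : Fin n, ‖S (l.1 + 1)‖ ^ 2) := by
          rw [Finset.sum_add_distrib, ← Finset.mul_sum, ← Finset.mul_sum]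
      _ ≤ 4 * ∑ l ∈ range n, ‖S l‖ ^ 2 := by
          rw [hsum1]; linarith [hsum2]
  rw [hre]
  exact hmain
end

section
/- Let A be a self-adjoint positive semidefinite operator on a finite-dimensional Hilbert space with operator norm ‖A‖, let 0 < ε < 1, σ > 0, and define φ_{ε,σ}(λ) = |ln ε|^{-1}·(∫_ε^1 (1-e^{-λt})t^{-2} dt + ∫_1^∞ (1-e^{-λt}) t^{-1-σ} dt). Then ‖A - φ_{ε,σ}(A)‖ ≤ (2σ^{-1} + ‖A‖²)/(2|ln ε|), where φ_{ε,σ}(A) is defined by the functional calculus. -/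
open MeasureTheory

set_option maxHeartbeats 1000000

lemma aux_one_sub_exp_le (y : ℝ) : 1 - Real.exp (-y) ≤ y := by
  have := Real.add_one_le_exp (-y); linarith

lemma aux_le_one_sub_exp (y : ℝ) (hy : 0 ≤ y) : y - y^2/2 ≤ 1 - Real.exp (-y) := by
  have h1 : 1 + y + y^2/2 ≤ Real.exp y := by
    have := Real.sum_le_exp_of_nonneg hy 3
    simp [Finset.sum_range_succ] at this
    linarith
  have h2 : Real.exp (-y) * Real.exp y = 1 := by
    rw [← Real.exp_add]; simp
  have h3 : 0 < Real.exp (-y) := Real.exp_pos _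
  nlinarith [mul_le_mul_of_nonneg_left h1 h3.le, sq_nonneg y, sq_nonneg (y^2),
    mul_nonneg (mul_nonneg h3.le hy) hy]

/-- For a positive self-adjoint operator `A` on a finite-dimensional complex
Hilbert space, `0 < ε < 1` and `σ > 0`, the subordinated generator
`φ_{ε,σ}(A)` given by functional calculus of
`φ_{ε,σ}(λ) = |ln ε|⁻¹ (∫_ε^1 (1-e^{-λt}) t⁻² dt + ∫_1^∞ (1-e^{-λt}) t^{-1-σ} dt)`
satisfies `‖A - φ_{ε,σ}(A)‖ ≤ (2σ⁻¹ + ‖A‖²)/(2|ln ε|)`. -/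
theorem stmt_18 {H : Type*} [NormedAddCommGroup H] [InnerProductSpace ℂ H]
    [FiniteDimensional ℂ H] (A : H →L[ℂ] H) (hA : IsSelfAdjoint A)
    (hApos : ∀ x, 0 ≤ ((inner ℂ (A x) x : ℂ)).re)
    (ε σ : ℝ) (hε : 0 < ε) (hε1 : ε < 1) (hσ : 0 < σ) :
    ‖A - cfc (fun l : ℝ =>
        |Real.log ε|⁻¹ * ((∫ t in ε..1, (1 - Real.exp (-(l * t))) / t ^ 2) +
          ∫ t in Set.Ioi (1 : ℝ), (1 - Real.exp (-(l * t))) * t ^ (-1 - σ))) A‖ ≤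
      (2 * σ⁻¹ + ‖A‖ ^ 2) / (2 * |Real.log ε|) := by
  have hlog : Real.log ε < 0 := Real.log_neg hε hε1
  have hL : 0 < |Real.log ε| := abs_pos.mpr hlog.ne
  set L : ℝ := |Real.log ε| with hLdef
  have hLval : L = -Real.log ε := abs_of_neg hlog
  -- right hand side is nonneg
  have hrhs : 0 ≤ (2 * σ⁻¹ + ‖A‖ ^ 2) / (2 * L) := by positivity
  rcases subsingleton_or_nontrivial H with hH | hH
  · have : Subsingleton (H →L[ℂ] H) := by infer_instance
    calc ‖A - _‖ = ‖(0 : H →L[ℂ] H)‖ := by rw [Subsingleton.elim (A - _) 0]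
    _ ≤ _ := by rw [norm_zero]; exact hrhs
  -- spectrum facts
  have hpos : A.IsPositive := ⟨hA.isSymmetric, fun x => hApos x⟩
  have hspec0 : ∀ x ∈ spectrum ℝ A, (0:ℝ) ≤ x :=
    SpectrumRestricts.nnreal_iff.mp hpos.spectrumRestricts
  have hspecA : ∀ x ∈ spectrum ℝ A, x ≤ ‖A‖ := fun x hx =>
    (le_abs_self x).trans (spectrum.norm_le_norm_of_mem hx)
  set φ : ℝ → ℝ := fun l =>
    L⁻¹ * ((∫ t in ε..1, (1 - Real.exp (-(l * t))) / t ^ 2) +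
      ∫ t in Set.Ioi (1 : ℝ), (1 - Real.exp (-(l * t))) * t ^ (-1 - σ)) with hφ
  -- integrability of the tail weight
  have hw : IntegrableOn (fun t : ℝ => t ^ (-1 - σ)) (Set.Ioi 1) :=
    integrableOn_Ioi_rpow_of_lt (by linarith) one_pos
  have hwval : (∫ t in Set.Ioi (1:ℝ), t ^ (-1 - σ)) = σ⁻¹ := by
    rw [integral_Ioi_rpow_of_lt (by linarith) one_pos, Real.one_rpow,
      show (-1 - σ + 1) = -σ by ring, neg_div_neg_eq, one_div]
  -- continuity of φ on Ici 0
  have hconttail : ContinuousOn (fun l : ℝ =>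
      ∫ t in Set.Ioi (1 : ℝ), (1 - Real.exp (-(l * t))) * t ^ (-1 - σ)) (Set.Ici 0) := by
    apply continuousOn_of_dominated (bound := fun t : ℝ => t ^ (-1 - σ))
    · intro l hl
      apply ContinuousOn.aestronglyMeasurable _ measurableSet_Ioi
      apply ContinuousOn.mul (by fun_prop)
      intro t ht
      exact (Real.continuousAt_rpow_const t _
        (Or.inl (ne_of_gt (lt_trans one_pos ht)))).continuousWithinAt
    · intro l hl
      rw [ae_restrict_iff' measurableSet_Ioi]
      filter_upwards with t ht
      have ht0 : (0:ℝ) < t := lt_trans one_pos ht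
      have h1 : 0 ≤ 1 - Real.exp (-(l * t)) := by
        have : Real.exp (-(l * t)) ≤ 1 := Real.exp_le_one_iff.mpr (by
          simp only [neg_nonpos]; exact mul_nonneg hl ht0.le)
        linarith
      have h2 : 1 - Real.exp (-(l * t)) ≤ 1 := by
        have := Real.exp_pos (-(l * t)); linarith
      rw [Real.norm_eq_abs, abs_mul, abs_of_nonneg h1,
        abs_of_nonneg (Real.rpow_nonneg ht0.le _)]
      nlinarith [Real.rpow_nonneg ht0.le (-1-σ)]
    · exact hw
    · filter_upwards with t
      exact (Continuous.mul (by fun_prop) continuous_const).continuousOn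
  have hconthead : ContinuousOn (fun l : ℝ =>
      ∫ t in ε..1, (1 - Real.exp (-(l * t))) / t ^ 2) (Set.Ici 0) := by
    simp only [intervalIntegral.integral_of_le hε1.le]
    apply continuousOn_of_dominated (bound := fun _ : ℝ => ε⁻¹ ^ 2)
    · intro l hl
      apply ContinuousOn.aestronglyMeasurable _ measurableSet_Ioc
      apply ContinuousOn.div (by fun_prop) (by fun_prop)
      intro t ht
      have : (0:ℝ) < t := lt_of_lt_of_le hε ht.1.le
      positivity
    · intro l hl
      rw [ae_restrict_iff' measurableSet_Ioc]
      filter_upwards with t ht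
      have ht0 : (0:ℝ) < t := lt_of_lt_of_le hε ht.1.le
      have h1 : 0 ≤ 1 - Real.exp (-(l * t)) := by
        have : Real.exp (-(l * t)) ≤ 1 := Real.exp_le_one_iff.mpr (by
          simp only [neg_nonpos]; exact mul_nonneg hl (le_of_lt ht0))
        linarith
      have h2 : 1 - Real.exp (-(l * t)) ≤ 1 := by
        have := Real.exp_pos (-(l * t)); linarith
      rw [Real.norm_eq_abs, abs_div, abs_of_nonneg h1, abs_of_nonneg (by positivity : (0:ℝ) ≤ t^2)]
      rw [div_le_iff₀ (by positivity)]
      have hεt : ε ≤ t := ht.1.le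
      calc 1 - Real.exp (-(l*t)) ≤ 1 := h2
      _ ≤ (ε⁻¹)^2 * t^2 := by
          rw [← mul_pow]
          have : (1:ℝ) ≤ ε⁻¹ * t := by
            rw [← div_eq_inv_mul, le_div_iff₀ hε]; linarith
          nlinarith
    · exact integrableOn_const measure_Ioc_lt_top.ne
    · filter_upwards with t
      exact (Continuous.div_const (by fun_prop) _).continuousOn
  have hφcont : ContinuousOn φ (Set.Ici 0) :=
    continuousOn_const.mul (hconthead.add hconttail)
  have hspecsub : spectrum ℝ A ⊆ Set.Ici 0 := fun x hx => hspec0 x hx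
  -- rewrite A - cfc φ A = cfc (id - φ) A
  have hsub : cfc (fun l : ℝ => l - φ l) A = A - cfc φ A := by
    rw [cfc_sub (fun l : ℝ => l) φ A continuousOn_id (hφcont.mono hspecsub), cfc_id' ℝ A]
  rw [hφ] at hsub
  rw [← hsub]
  -- key scalar bound on the spectrum
  apply norm_cfc_le hrhs
  intro x hx
  have hx0 : 0 ≤ x := hspec0 x hx
  have hxA : x ≤ ‖A‖ := hspecA x hx
  -- bounds on the head integral
  have hcont1 : ContinuousOn (fun t : ℝ => (1 - Real.exp (-(x * t))) / t ^ 2)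
      (Set.uIcc ε 1) := by
    rw [Set.uIcc_of_le hε1.le]
    apply ContinuousOn.div (by fun_prop) (by fun_prop)
    intro t ht
    have : (0:ℝ) < t := lt_of_lt_of_le hε ht.1
    positivity
  have hint1 : IntervalIntegrable (fun t : ℝ => (1 - Real.exp (-(x * t))) / t ^ 2)
      volume ε 1 := hcont1.intervalIntegrable
  have hcont2 : ContinuousOn (fun t : ℝ => x * t⁻¹) (Set.uIcc ε 1) := by
    rw [Set.uIcc_of_le hε1.le]
    exact continuousOn_const.mul (ContinuousOn.inv₀ continuousOn_id
      fun t ht => (lt_of_lt_of_le hε ht.1).ne')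
  have hint2 : IntervalIntegrable (fun t : ℝ => x * t⁻¹) volume ε 1 :=
    hcont2.intervalIntegrable
  have hint3 : IntervalIntegrable (fun t : ℝ => x * t⁻¹ - x^2/2) volume ε 1 :=
    hint2.sub intervalIntegrable_const
  have hval2 : (∫ t in ε..1, x * t⁻¹) = x * L := by
    rw [intervalIntegral.integral_const_mul, integral_inv_of_pos hε one_pos]
    rw [hLval, ← Real.log_inv]
    norm_num
  have hhead_ub : (∫ t in ε..1, (1 - Real.exp (-(x * t))) / t ^ 2) ≤ x * L := by
    rw [← hval2]
    apply intervalIntegral.integral_mono_on hε1.le hint1 hint2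
    intro t ht
    have ht0 : (0:ℝ) < t := lt_of_lt_of_le hε ht.1
    rw [div_le_iff₀ (by positivity)]
    have := aux_one_sub_exp_le (x * t)
    have : 1 - Real.exp (-(x*t)) ≤ x * t := this
    calc 1 - Real.exp (-(x*t)) ≤ x * t := this
    _ = x * t⁻¹ * t^2 := by field_simp
  have hhead_lb : x * L - x^2/2 ≤ ∫ t in ε..1, (1 - Real.exp (-(x * t))) / t ^ 2 := by
    have hmono : (∫ t in ε..1, (x * t⁻¹ - x^2/2)) ≤
        ∫ t in ε..1, (1 - Real.exp (-(x * t))) / t ^ 2 := by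
      apply intervalIntegral.integral_mono_on hε1.le hint3 hint1
      intro t ht
      have ht0 : (0:ℝ) < t := lt_of_lt_of_le hε ht.1
      rw [le_div_iff₀ (by positivity)]
      have hkey := aux_le_one_sub_exp (x * t) (by positivity)
      calc (x * t⁻¹ - x^2/2) * t^2 = x * t - x^2/2 * t^2 := by field_simp
      _ ≤ x * t - (x*t)^2/2 := by nlinarith [sq_nonneg x, ht.2]
      _ ≤ 1 - Real.exp (-(x*t)) := by nlinarith
    have hval3 : (∫ t in ε..1, (x * t⁻¹ - x^2/2)) = x * L - (1 - ε) * (x^2/2) := by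
      rw [intervalIntegral.integral_sub hint2 intervalIntegrable_const,
        hval2, intervalIntegral.integral_const]
      simp [smul_eq_mul]
    rw [hval3] at hmono
    nlinarith [sq_nonneg x, hε.le]
  -- bounds on the tail integral
  have htail_meas : AEStronglyMeasurable
      (fun t : ℝ => (1 - Real.exp (-(x * t))) * t ^ (-1 - σ))
      (volume.restrict (Set.Ioi 1)) := by
    apply ContinuousOn.aestronglyMeasurable _ measurableSet_Ioi
    apply ContinuousOn.mul (by fun_prop)
    intro t ht
    exact (Real.continuousAt_rpow_const t _
      (Or.inl (ne_of_gt (lt_trans one_pos ht)))).continuousWithinAt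
  have htail_bd : ∀ t ∈ Set.Ioi (1:ℝ),
      0 ≤ (1 - Real.exp (-(x * t))) * t ^ (-1 - σ) ∧
      (1 - Real.exp (-(x * t))) * t ^ (-1 - σ) ≤ t ^ (-1 - σ) := by
    intro t ht
    have ht0 : (0:ℝ) < t := lt_trans one_pos ht
    have h1 : 0 ≤ 1 - Real.exp (-(x * t)) := by
      have : Real.exp (-(x * t)) ≤ 1 := Real.exp_le_one_iff.mpr (by
        simp only [neg_nonpos]; positivity)
      linarith
    have h2 : 1 - Real.exp (-(x * t)) ≤ 1 := by
      have := Real.exp_pos (-(x * t)); linarith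
    have hr : 0 ≤ t ^ (-1 - σ) := Real.rpow_nonneg ht0.le _
    exact ⟨mul_nonneg h1 hr, by nlinarith⟩
  have htail_int : IntegrableOn
      (fun t : ℝ => (1 - Real.exp (-(x * t))) * t ^ (-1 - σ)) (Set.Ioi 1) := by
    apply Integrable.mono hw htail_meas
    rw [ae_restrict_iff' measurableSet_Ioi]
    filter_upwards with t ht
    obtain ⟨h1, h2⟩ := htail_bd t ht
    rw [Real.norm_eq_abs, Real.norm_eq_abs, abs_of_nonneg h1,
      abs_of_nonneg (Real.rpow_nonneg (lt_trans one_pos ht).le _)]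
    exact h2
  have htail_ub : (∫ t in Set.Ioi (1:ℝ), (1 - Real.exp (-(x * t))) * t ^ (-1 - σ)) ≤ σ⁻¹ := by
    rw [← hwval]
    apply setIntegral_mono_on htail_int hw measurableSet_Ioi
    intro t ht
    exact (htail_bd t ht).2
  have htail_lb : 0 ≤ ∫ t in Set.Ioi (1:ℝ), (1 - Real.exp (-(x * t))) * t ^ (-1 - σ) :=
    setIntegral_nonneg measurableSet_Ioi fun t ht => (htail_bd t ht).1
  -- combine
  have hLne : L ≠ 0 := hL.ne'
  rw [Real.norm_eq_abs, abs_le]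
  constructor
  · -- -(c) ≤ x - φ x, i.e. φ x - x ≤ c
    have : L⁻¹ * ((x * L) + σ⁻¹) ≤ x + (2*σ⁻¹ + ‖A‖^2)/(2*L) := by
      have e1 : L⁻¹ * ((x * L) + σ⁻¹) = x + σ⁻¹ / L := by
        field_simp
      rw [e1]
      have h1 : σ⁻¹ / L ≤ (2*σ⁻¹ + ‖A‖^2)/(2*L) := by
        rw [div_le_div_iff₀ hL (by positivity)]
        nlinarith [sq_nonneg ‖A‖, inv_nonneg.mpr hσ.le, hL]
      linarith
    have hφle : L⁻¹ * ((∫ t in ε..1, (1 - Real.exp (-(x * t))) / t ^ 2) +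
        ∫ t in Set.Ioi (1:ℝ), (1 - Real.exp (-(x * t))) * t ^ (-1 - σ)) ≤
        L⁻¹ * ((x * L) + σ⁻¹) := by
      apply mul_le_mul_of_nonneg_left _ (inv_nonneg.mpr hL.le)
      linarith
    linarith
  · -- x - φ x ≤ c
    have : x - (2*σ⁻¹ + ‖A‖^2)/(2*L) ≤ L⁻¹ * ((x * L - x^2/2) + 0) := by
      have e2 : L⁻¹ * ((x * L - x^2/2) + 0) = x - (x^2/2) / L := by
        field_simp
        ring
      rw [e2]
      have hx2 : x^2 ≤ ‖A‖^2 := by nlinarith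
      have h1 : (x^2/2) / L ≤ (2*σ⁻¹ + ‖A‖^2)/(2*L) := by
        rw [div_le_div_iff₀ hL (by positivity)]
        nlinarith [mul_le_mul_of_nonneg_right hx2 hL.le,
          mul_nonneg (inv_nonneg.mpr hσ.le) hL.le]
      linarith
    have hφge : L⁻¹ * ((x * L - x^2/2) + 0) ≤
        L⁻¹ * ((∫ t in ε..1, (1 - Real.exp (-(x * t))) / t ^ 2) +
        ∫ t in Set.Ioi (1:ℝ), (1 - Real.exp (-(x * t))) * t ^ (-1 - σ)) := by
      apply mul_le_mul_of_nonneg_left _ (inv_nonneg.mpr hL.le)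
      linarith
    linarith
end

section
/- For n ≥ 2, let y = (n/√(n-1)) Σ_{j=2}^n |11⟩⟨jj| in M_n(ℂ)⊗M_n(ℂ) with normalized trace τ = tr/n², and let E = E_N be the trace-preserving conditional expectation onto M_n⊗1 (partial trace over the second factor, normalized). Then τ(|y|² log |y|²) - τ(E(|y|²) log E(|y|²)) = 2 log n - log(n/(n-1)). -/
open Matrix

/-- quadratic relation bounds the real spectrum -/
lemma spectrum_subset_of_quad {d : Type*} [Fintype d] [DecidableEq d]
    (A : Matrix d d ℂ) (r : ℝ) (h : A * A = ((r : ℝ) : ℂ) • A) :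
    spectrum ℝ A ⊆ {0, r} := by
  intro x hx
  by_contra hne
  simp only [Set.mem_insert_iff, Set.mem_singleton_iff, not_or] at hne
  obtain ⟨hx0, hxr⟩ := hne
  apply spectrum.mem_iff.mp hx
  have hs : ((x : ℂ) * ((r : ℂ) - (x : ℂ))) ≠ 0 := by
    refine mul_ne_zero ?_ ?_
    · exact_mod_cast Complex.ofReal_ne_zero.mpr hx0
    · rw [sub_ne_zero]
      exact_mod_cast fun hh => hxr (by exact_mod_cast hh.symm)
  have key : (((x : ℂ) • 1 - A)) * (((x : ℂ) * ((r : ℂ) - (x : ℂ)))⁻¹ •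
      (((r : ℂ) - (x : ℂ)) • 1 - A)) = 1 := by
    rw [mul_smul_comm]
    have expand : ((x : ℂ) • 1 - A) * (((r : ℂ) - (x : ℂ)) • 1 - A)
        = ((x : ℂ) * ((r : ℂ) - (x : ℂ))) • 1 := by
      have h2 : A * A = ((r : ℝ) : ℂ) • A := h
      simp only [sub_mul, mul_sub, smul_mul_assoc, mul_smul_comm, one_mul, mul_one, h2,
        smul_smul]
      module
    rw [expand, smul_smul, inv_mul_cancel₀ hs, one_smul]
  have hunit : IsUnit ((x : ℂ) • (1 : Matrix d d ℂ) - A) := by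
    exact ⟨⟨_, _, key, mul_eq_one_comm.mp key⟩, rfl⟩
  have : algebraMap ℝ (Matrix d d ℂ) x = (x : ℂ) • 1 := by
    rw [Algebra.algebraMap_eq_smul_one, ← smul_one_smul ℂ x (1 : Matrix d d ℂ)]
    norm_num
  rwa [this]

lemma matLog_of_quad {d : Type*} [Fintype d] [DecidableEq d]
    (A : Matrix d d ℂ) (hsa : IsSelfAdjoint A) (r : ℝ) (hr : r ≠ 0)
    (h : A * A = ((r : ℝ) : ℂ) • A) :
    matLog A = ((Real.log r / r : ℝ)) • A := by
  rw [matLog]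
  have hc : cfc Real.log A = cfc (fun x : ℝ => (Real.log r / r) * x) A := by
    apply cfc_congr
    intro x hx
    rcases spectrum_subset_of_quad A r h hx with h0 | h0
    · simp [h0, Real.log_zero]
    · simp only [Set.mem_singleton_iff] at h0
      simp [h0, div_mul_cancel₀ _ hr]
  rw [hc, cfc_const_mul _ _ A, cfc_id' ℝ A]

lemma trace_mul_matLog {d : Type*} [Fintype d] [DecidableEq d]
    (A : Matrix d d ℂ) (hsa : IsSelfAdjoint A) (r : ℝ) (hr : r ≠ 0)
    (h : A * A = ((r : ℝ) : ℂ) • A) :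
    (A * matLog A).trace = ((Real.log r : ℝ) : ℂ) * A.trace := by
  rw [matLog_of_quad A hsa r hr h, mul_smul_comm, h, trace_smul, trace_smul]
  have : ((Real.log r / r : ℝ) : ℂ) * ((r : ℝ) : ℂ) = ((Real.log r : ℝ) : ℂ) := by
    push_cast
    exact div_mul_cancel₀ _ (by exact_mod_cast hr)
  calc (Real.log r / r : ℝ) • (((r : ℝ) : ℂ) • A.trace)
      = ((Real.log r / r : ℝ) : ℂ) * (((r : ℝ) : ℂ) * A.trace) := by
        simp [Complex.real_smul, smul_eq_mul]
    _ = ((Real.log r : ℝ) : ℂ) * A.trace := by rw [← mul_assoc, this]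

lemma sum_ite_ne (m : ℕ) (w : ℂ) :
    ∑ a : Fin (m + 2), (if a ≠ 0 then w else 0) = ((m + 1 : ℕ) : ℂ) * w := by
  rw [Finset.sum_ite, Finset.sum_const, Finset.sum_const, smul_zero, add_zero,
    Finset.filter_ne', Finset.card_erase_of_mem (Finset.mem_univ _)]
  simp [Fintype.card_fin, mul_comm]

lemma sum_diag_ne (m : ℕ) (w : ℂ) :
    ∑ r : Fin (m + 2) × Fin (m + 2), (if r.1 = r.2 ∧ r.1 ≠ 0 then w else 0)
      = ((m + 1 : ℕ) : ℂ) * w := by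
  rw [Fintype.sum_prod_type]
  simp only [ite_and]
  rw [Finset.sum_congr rfl (fun a _ => Finset.sum_ite_eq Finset.univ a
    (fun _ => if a ≠ 0 then w else 0))]
  simpa using sum_ite_ne m w

lemma sum_fst_ne (m : ℕ) (w : ℂ) :
    ∑ r : Fin (m + 2) × Fin (m + 2), (if r.1 ≠ 0 then w else 0)
      = ((m + 2 : ℕ) : ℂ) * (((m + 1 : ℕ) : ℂ) * w) := by
  rw [Fintype.sum_prod_type]
  have h1 : ∀ a : Fin (m + 2), ∑ _b : Fin (m + 2), (if a ≠ 0 then w else 0)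
      = ((m + 2 : ℕ) : ℂ) * (if a ≠ 0 then w else 0) := by
    intro a
    rw [Finset.sum_const]
    simp [nsmul_eq_mul]
  rw [Finset.sum_congr rfl (fun a _ => h1 a), ← Finset.mul_sum, sum_ite_ne m w]

def M1 (m : ℕ) (v : ℝ) : Matrix (Fin (m + 2) × Fin (m + 2)) (Fin (m + 2) × Fin (m + 2)) ℂ :=
  Matrix.of fun p q =>
    if (p.1 = p.2 ∧ p.1 ≠ 0) ∧ (q.1 = q.2 ∧ q.1 ≠ 0) then ((v : ℝ) : ℂ) else 0

def M2 (m : ℕ) (v : ℝ) : Matrix (Fin (m + 2) × Fin (m + 2)) (Fin (m + 2) × Fin (m + 2)) ℂ :=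
  Matrix.of fun p q => if p = q ∧ p.1 ≠ 0 then ((v : ℝ) : ℂ) else 0

lemma M1_selfAdjoint (m : ℕ) (v : ℝ) : _root_.IsSelfAdjoint (M1 m v) := by
  rw [_root_.IsSelfAdjoint, Matrix.star_eq_conjTranspose]
  ext p q
  rw [Matrix.conjTranspose_apply]
  show star (if (q.1 = q.2 ∧ q.1 ≠ 0) ∧ (p.1 = p.2 ∧ p.1 ≠ 0) then ((v : ℝ) : ℂ) else 0)
    = M1 m v p q
  rw [if_congr (show ((q.1 = q.2 ∧ q.1 ≠ 0) ∧ (p.1 = p.2 ∧ p.1 ≠ 0)) ↔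
    ((p.1 = p.2 ∧ p.1 ≠ 0) ∧ (q.1 = q.2 ∧ q.1 ≠ 0)) by tauto) rfl rfl]
  show _ = if _ then _ else _
  split_ifs <;> simp [RCLike.star_def, Complex.conj_ofReal]

lemma M2_selfAdjoint (m : ℕ) (v : ℝ) : _root_.IsSelfAdjoint (M2 m v) := by
  rw [_root_.IsSelfAdjoint, Matrix.star_eq_conjTranspose]
  ext p q
  rw [Matrix.conjTranspose_apply]
  show star (if q = p ∧ q.1 ≠ 0 then ((v : ℝ) : ℂ) else 0) = M2 m v p q
  rw [if_congr (show (q = p ∧ q.1 ≠ 0) ↔ (p = q ∧ p.1 ≠ 0) by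
    constructor <;> (rintro ⟨rfl, h⟩; exact ⟨rfl, h⟩)) rfl rfl]
  show _ = if _ then _ else _
  split_ifs <;> simp [RCLike.star_def, Complex.conj_ofReal]

lemma M1_mul (m : ℕ) (v : ℝ) :
    M1 m v * M1 m v = ((((m + 1 : ℕ) : ℝ) * v : ℝ) : ℂ) • M1 m v := by
  ext p q
  rw [Matrix.mul_apply, Matrix.smul_apply]
  by_cases hp : (p.1 = p.2 ∧ p.1 ≠ 0) ∧ (q.1 = q.2 ∧ q.1 ≠ 0)
  · obtain ⟨hp1, hq1⟩ := hp
    have hterm : ∀ r : Fin (m + 2) × Fin (m + 2),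
        M1 m v p r * M1 m v r q = if r.1 = r.2 ∧ r.1 ≠ 0 then ((v:ℂ) * (v:ℂ)) else 0 := by
      intro r
      simp only [M1, Matrix.of_apply, and_iff_right hp1, and_iff_left hq1]
      split_ifs <;> simp
    rw [Finset.sum_congr rfl fun r _ => hterm r, sum_diag_ne]
    have hM : M1 m v p q = (v : ℂ) := if_pos ⟨hp1, hq1⟩
    rw [hM, smul_eq_mul]
    push_cast
    ring
  · have hz : M1 m v p q = 0 := if_neg hp
    rw [hz, smul_zero]
    apply Finset.sum_eq_zero
    intro r _
    rcases not_and_or.mp hp with h | h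
    · have : M1 m v p r = 0 := if_neg (fun hc => h hc.1)
      rw [this, zero_mul]
    · have : M1 m v r q = 0 := if_neg (fun hc => h hc.2)
      rw [this, mul_zero]

lemma M1_trace (m : ℕ) (v : ℝ) : (M1 m v).trace = ((m + 1 : ℕ) : ℂ) * (v : ℂ) := by
  rw [Matrix.trace]
  simp only [Matrix.diag, M1, Matrix.of_apply, and_self]
  exact sum_diag_ne m (v : ℂ)

lemma M2_mul (m : ℕ) (v : ℝ) : M2 m v * M2 m v = ((v : ℝ) : ℂ) • M2 m v := by
  ext p q
  rw [Matrix.mul_apply, Matrix.smul_apply]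
  have hterm : ∀ r : Fin (m + 2) × Fin (m + 2),
      M2 m v p r * M2 m v r q = if r = p ∧ (p = q ∧ p.1 ≠ 0) then ((v:ℂ) * (v:ℂ)) else 0 := by
    intro r
    rcases eq_or_ne r p with rfl | h
    · by_cases h0 : r.1 ≠ 0
      · by_cases hq : r = q
        · subst hq
          simp [M2, h0]
        · simp [M2, h0, hq]
      · simp [M2, h0]
    · have h1 : M2 m v p r = 0 := if_neg (fun hc => h hc.1.symm)
      rw [h1, zero_mul, if_neg (fun hc => h hc.1)]
  rw [Finset.sum_congr rfl fun r _ => hterm r]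
  simp only [ite_and]
  rw [Finset.sum_ite_eq' Finset.univ p fun _ => _]
  simp only [Finset.mem_univ, if_true, M2, Matrix.of_apply, smul_eq_mul, ite_and]
  split_ifs <;> simp
lemma M2_trace (m : ℕ) (v : ℝ) :
    (M2 m v).trace = ((m + 2 : ℕ) : ℂ) * (((m + 1 : ℕ) : ℂ) * (v : ℂ)) := by
  rw [Matrix.trace]
  simp only [Matrix.diag, M2, Matrix.of_apply, and_self, true_and]
  exact sum_fst_ne m (v : ℂ)

/-- Failure of the Rothaus lemma data: for `N = n + 2 ≥ 2`, the rank-one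
element `y = (N/√(N-1)) Σ_{j≠0} |00⟩⟨jj|` of `M_N ⊗ M_N` with normalized
trace `τ = tr/N²` and conditional expectation `E` onto `M_N ⊗ 1`
(normalized partial trace over the second factor) satisfies
`τ(|y|² log|y|²) - τ(E(|y|²) log E(|y|²)) = 2 log N - log (N/(N-1))`. -/
theorem stmt_19 (n : ℕ)
    (y : Matrix (Fin (n + 2) × Fin (n + 2)) (Fin (n + 2) × Fin (n + 2)) ℂ)
    (hy : ∀ p q, y p q =
      if p.1 = 0 ∧ p.2 = 0 ∧ q.1 = q.2 ∧ q.1 ≠ 0 then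
        ((((n + 2 : ℕ) : ℝ) / Real.sqrt ((n + 2 : ℕ) - 1) : ℝ) : ℂ) else 0)
    (E : Matrix (Fin (n + 2) × Fin (n + 2)) (Fin (n + 2) × Fin (n + 2)) ℂ →
         Matrix (Fin (n + 2) × Fin (n + 2)) (Fin (n + 2) × Fin (n + 2)) ℂ)
    (hE : ∀ ρ p q, E ρ p q =
      if p.2 = q.2 then ((n + 2 : ℕ) : ℂ)⁻¹ * ∑ c : Fin (n + 2), ρ (p.1, c) (q.1, c)
      else 0) :
    ((yᴴ * y * matLog (yᴴ * y)).trace / ((n + 2 : ℕ) ^ 2 : ℂ)).re -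
      ((E (yᴴ * y) * matLog (E (yᴴ * y))).trace / ((n + 2 : ℕ) ^ 2 : ℂ)).re =
      2 * Real.log ((n + 2 : ℕ) : ℝ) -
        Real.log (((n + 2 : ℕ) : ℝ) / (((n + 2 : ℕ) : ℝ) - 1)) := by
  set c : ℝ := (((n + 2 : ℕ) : ℝ) / Real.sqrt (((n + 2 : ℕ) : ℝ) - 1) : ℝ) with hcdef
  have hn1 : ((n + 2 : ℕ) : ℝ) - 1 = (n : ℝ) + 1 := by push_cast; ring
  have hn2 : ((n + 2 : ℕ) : ℝ) = (n : ℝ) + 2 := by push_cast; ring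
  have hsq : Real.sqrt (((n + 2 : ℕ) : ℝ) - 1) * Real.sqrt (((n + 2 : ℕ) : ℝ) - 1)
      = (n : ℝ) + 1 := by
    rw [hn1]; exact Real.mul_self_sqrt (by positivity)
  have hcc : c * c = ((n : ℝ) + 2) ^ 2 / ((n : ℝ) + 1) := by
    rw [hcdef, div_mul_div_comm, hsq, hn2]; ring
  -- Step 1 : |y|² = M1 n (c*c)
  have hAeq : yᴴ * y = M1 n (c * c) := by
    ext p q
    rw [Matrix.mul_apply]
    have hterm : ∀ r : Fin (n + 2) × Fin (n + 2),
        yᴴ p r * y r q =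
          if r = ((0 : Fin (n + 2)), (0 : Fin (n + 2))) ∧
              ((p.1 = p.2 ∧ p.1 ≠ 0) ∧ (q.1 = q.2 ∧ q.1 ≠ 0)) then
            ((c * c : ℝ) : ℂ) else 0 := by
      intro r
      rw [Matrix.conjTranspose_apply, hy r p, hy r q]
      by_cases h0 : r = ((0 : Fin (n + 2)), (0 : Fin (n + 2)))
      · subst h0
        have e1 : ((((0, 0) : Fin (n + 2) × Fin (n + 2)).1 = 0 ∧
            ((0, 0) : Fin (n + 2) × Fin (n + 2)).2 = 0 ∧ p.1 = p.2 ∧ p.1 ≠ 0))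
            ↔ (p.1 = p.2 ∧ p.1 ≠ 0) := by simp
        have e2 : ((((0, 0) : Fin (n + 2) × Fin (n + 2)).1 = 0 ∧
            ((0, 0) : Fin (n + 2) × Fin (n + 2)).2 = 0 ∧ q.1 = q.2 ∧ q.1 ≠ 0))
            ↔ (q.1 = q.2 ∧ q.1 ≠ 0) := by simp
        have e3 : (((0, 0) : Fin (n + 2) × Fin (n + 2)) = (0, 0) ∧
            ((p.1 = p.2 ∧ p.1 ≠ 0) ∧ (q.1 = q.2 ∧ q.1 ≠ 0)))
            ↔ ((p.1 = p.2 ∧ p.1 ≠ 0) ∧ (q.1 = q.2 ∧ q.1 ≠ 0)) := by simp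
        rw [if_congr e1 rfl rfl, if_congr e2 rfl rfl, if_congr e3 rfl rfl]
        by_cases hp : p.1 = p.2 ∧ p.1 ≠ 0
        · by_cases hq' : q.1 = q.2 ∧ q.1 ≠ 0
          · rw [if_pos hp, if_pos hq', if_pos ⟨hp, hq'⟩]
            simp only [Complex.star_def, Complex.conj_ofReal]
            push_cast
            ring
          · rw [if_pos hp, if_neg hq', mul_zero, if_neg (fun hc => hq' hc.2)]
        · rw [if_neg hp, star_zero, zero_mul, if_neg (fun hc => hp hc.1)]
      · have hne : ¬(r.1 = 0 ∧ r.2 = 0) := fun hc => h0 (Prod.ext hc.1 hc.2)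
        rw [if_neg (fun hc => hne ⟨hc.1, hc.2.1⟩), if_neg (fun hc => hne ⟨hc.1, hc.2.1⟩),
          star_zero, zero_mul, if_neg (fun hc => h0 hc.1)]
    rw [Finset.sum_congr rfl fun r _ => hterm r]
    simp only [ite_and]
    rw [Finset.sum_ite_eq' Finset.univ ((0 : Fin (n + 2)), (0 : Fin (n + 2))) _]
    simp only [Finset.mem_univ, if_true, M1, Matrix.of_apply, ite_and]
  -- Step 2 : E(|y|²) = M2 n ((n+2)/(n+1))
  set w : ℝ := ((n : ℝ) + 2) / ((n : ℝ) + 1) with hwdef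
  have hBeq : E (yᴴ * y) = M2 n w := by
    rw [hAeq]
    ext p q
    rw [hE]
    by_cases hpq2 : p.2 = q.2
    · rw [if_pos hpq2]
      have hterm : ∀ cc : Fin (n + 2),
          M1 n (c * c) (p.1, cc) (q.1, cc) =
            if cc = p.1 ∧ (p.1 = q.1 ∧ p.1 ≠ 0) then ((c * c : ℝ) : ℂ) else 0 := by
        intro cc
        show (if ((p.1 = cc ∧ p.1 ≠ 0) ∧ (q.1 = cc ∧ q.1 ≠ 0)) then ((c * c : ℝ) : ℂ) else 0)
          = _
        refine if_congr ?_ rfl rfl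
        constructor
        · rintro ⟨⟨h1, h2⟩, h3, h4⟩
          exact ⟨h1.symm, h1.trans h3.symm, h2⟩
        · rintro ⟨rfl, h2, h3⟩
          exact ⟨⟨rfl, h3⟩, h2.symm, h2 ▸ h3⟩
      rw [Finset.sum_congr rfl fun cc _ => hterm cc]
      simp only [ite_and]
      rw [Finset.sum_ite_eq' Finset.univ p.1 _]
      simp only [Finset.mem_univ, if_true]
      have hval : (((n + 2 : ℕ) : ℂ))⁻¹ * ((c * c : ℝ) : ℂ) = ((w : ℝ) : ℂ) := by
        have : (c * c) / ((n : ℝ) + 2) = w := by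
          rw [hcc, hwdef]
          field_simp
        rw [← this]
        push_cast
        ring
      by_cases h1 : p.1 = q.1
      · by_cases h2 : p.1 ≠ 0
        · rw [if_pos h1, if_pos h2]
          have hM : M2 n w p q = ((w : ℝ) : ℂ) := if_pos ⟨Prod.ext h1 hpq2, h2⟩
          rw [hM]
          exact hval
        · rw [if_pos h1, if_neg h2, mul_zero]
          have hM : M2 n w p q = 0 := if_neg (fun hc => h2 hc.2)
          rw [hM]
      · rw [if_neg h1, mul_zero]
        have hM : M2 n w p q = 0 := if_neg (fun hc => h1 (by rw [hc.1]))
        rw [hM]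
    · rw [if_neg hpq2]
      have : ¬(p = q ∧ p.1 ≠ 0) := fun hc => hpq2 (by rw [hc.1])
      exact (if_neg this).symm
  -- the two scalar relations
  have hApos : ((n + 1 : ℕ) : ℝ) * (c * c) = ((n : ℝ) + 2) ^ 2 := by
    rw [hcc]
    have h1 : (n : ℝ) + 1 ≠ 0 := by positivity
    field_simp
    push_cast
    ring
  have hrA0 : ((n + 1 : ℕ) : ℝ) * (c * c) ≠ 0 := by
    rw [hApos]; positivity
  have hrB0 : w ≠ 0 := by rw [hwdef]; positivity
  -- first trace value
  have key1 : ((yᴴ * y * matLog (yᴴ * y)).trace / ((n + 2 : ℕ) ^ 2 : ℂ)).re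
      = Real.log (((n + 1 : ℕ) : ℝ) * (c * c)) := by
    rw [hAeq, trace_mul_matLog _ (M1_selfAdjoint n (c * c)) _ hrA0 (M1_mul n (c * c)),
      M1_trace]
    have hnum : ((Real.log (((n + 1 : ℕ) : ℝ) * (c * c)) : ℝ) : ℂ) *
        (((n + 1 : ℕ) : ℂ) * ((c * c : ℝ) : ℂ))
        = ((Real.log (((n + 1 : ℕ) : ℝ) * (c * c)) * (((n : ℝ) + 2) ^ 2) : ℝ) : ℂ) := by
      rw [← hApos]
      push_cast
      ring
    rw [hnum]
    have hden : (((n + 2 : ℕ) : ℂ)) ^ 2 = (((((n : ℝ) + 2) ^ 2 : ℝ)) : ℂ) := by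
      push_cast; ring
    rw [hden, ← Complex.ofReal_div, Complex.ofReal_re]
    have h2 : ((n : ℝ) + 2) ^ 2 ≠ 0 := by positivity
    field_simp
  -- second trace value
  have key2 : ((E (yᴴ * y) * matLog (E (yᴴ * y))).trace / ((n + 2 : ℕ) ^ 2 : ℂ)).re
      = Real.log w := by
    rw [hBeq, trace_mul_matLog _ (M2_selfAdjoint n w) _ hrB0 (M2_mul n w), M2_trace]
    have hw2 : ((n + 2 : ℕ) : ℝ) * (((n + 1 : ℕ) : ℝ) * w) = ((n : ℝ) + 2) ^ 2 := by
      rw [hwdef]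
      have h1 : (n : ℝ) + 1 ≠ 0 := by positivity
      field_simp
      push_cast
      ring
    have hnum : ((Real.log w : ℝ) : ℂ) * (((n + 2 : ℕ) : ℂ) * (((n + 1 : ℕ) : ℂ) * ((w : ℝ) : ℂ)))
        = ((Real.log w * (((n : ℝ) + 2) ^ 2) : ℝ) : ℂ) := by
      rw [← hw2]
      push_cast
      ring
    rw [hnum]
    have hden : (((n + 2 : ℕ) : ℂ)) ^ 2 = (((((n : ℝ) + 2) ^ 2 : ℝ)) : ℂ) := by
      push_cast; ring
    rw [hden, ← Complex.ofReal_div, Complex.ofReal_re]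
    have h2 : ((n : ℝ) + 2) ^ 2 ≠ 0 := by positivity
    field_simp
  rw [key1, key2, hApos]
  have e1 : Real.log (((n : ℝ) + 2) ^ 2) = 2 * Real.log ((n + 2 : ℕ) : ℝ) := by
    rw [hn2, Real.log_pow]
    push_cast
    ring
  have e2 : ((n + 2 : ℕ) : ℝ) / (((n + 2 : ℕ) : ℝ) - 1) = w := by
    rw [hn1, hn2]
  rw [e1, e2]
end
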